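/- arXiv:2009.08596 — 3 statements merged into one kernel-verified Lean document; each statement's English description precedes it below -/
import Mathlib

section
/- Suppose there exists a □_{ω₁}-sequence, i.e., a sequence ⟨C_α : ω₁ < α < ω₂, α a limit ordinal⟩ such that each C_α is a closed unbounded subset of α, otp(C_α) < α, and C_β ∩ α = C_α whenever α is a limit point of C_β. Then there exists a sequence ⟨D_α : 0 < α < ω₂, α a limit ordinal⟩ such that: each D_α is a closed unbounded subset of α; otp(D_α) ≤ ω₁ for every α, and otp(D_α) < ω₁ whenever cf(α) = ω; every ordinal belonging to some D_β has cofinality at most ω; and D_β ∩ α = D_α whenever α is a limit point of D_β. -/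
open Ordinal Set

universe u

noncomputable section

/-- `ω₁`, the first uncountable cardinal, viewed as an ordinal. -/
def omega1 : Ordinal.{u} := (Cardinal.aleph 1).ord

/-- `ω₂`, the second uncountable cardinal, viewed as an ordinal. -/
def omega2 : Ordinal.{u} := (Cardinal.aleph 2).ord

/-- `δ` is a limit point of the set of ordinals `s`: `δ > 0` and `sup (s ∩ δ) = δ`. -/
def IsLimPt (s : Set Ordinal.{u}) (δ : Ordinal.{u}) : Prop :=
  0 < δ ∧ sSup (s ∩ Set.Iio δ) = δ

/-- `s` is a closed unbounded subset of the (limit) ordinal `α`: it consists of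
ordinals below `α`, is unbounded in `α`, and contains all of its limit points below `α`. -/
def IsClubIn (s : Set Ordinal.{u}) (α : Ordinal.{u}) : Prop :=
  s ⊆ Set.Iio α ∧ (∀ ξ < α, ∃ η ∈ s, ξ < η) ∧ ∀ δ < α, IsLimPt s δ → δ ∈ s

open Classical in
/-- The order type of a set of ordinals: the unique ordinal `o` whose lift is the
order type of the well-order induced on `s` (taken to be `0` if `s` is too large). -/
def otp (s : Set Ordinal.{u}) : Ordinal.{u} :=
  if h : ∃ o : Ordinal.{u},
      Ordinal.lift.{u + 1, u} o = @Ordinal.type s (Subrel (· < ·) (· ∈ s)) (by infer_instance)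
  then h.choose else 0

/-- `Λ(α,β)`: the largest limit point of `C β ∩ (α+1)`, taken to be `0` if none exists. -/
def Lam (C : Ordinal.{u} → Set Ordinal.{u}) (α β : Ordinal.{u}) : Ordinal.{u} :=
  sSup {δ | IsLimPt (C β ∩ Set.Iic α) δ}

/-- `C` is a square-like sequence `⟨C_α : α < ω₂⟩` as in the context:
`C_0 = ∅`, `C_{α+1} = {α}`; for limit `α < ω₂`, `C_α` is club in `α` with
`otp(C_α) ≤ ω₁`, and `otp(C_α) < ω₁` if `cf(α) = ω`; every member of any `C_α`
has cofinality at most `ω`; and `C_α = C_β ∩ α` whenever `α` is a limit point of `C_β`. -/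
structure SqSeq (C : Ordinal.{u} → Set Ordinal.{u}) : Prop where
  zero : C 0 = ∅
  succ : ∀ α : Ordinal.{u}, C (α + 1) = {α}
  club : ∀ α < omega2.{u}, Order.IsSuccLimit α → IsClubIn (C α) α
  otp_le : ∀ α < omega2.{u}, Order.IsSuccLimit α → otp (C α) ≤ omega1
  otp_lt : ∀ α < omega2.{u}, Order.IsSuccLimit α →
    Ordinal.cof α = Cardinal.aleph0 → otp (C α) < omega1
  cof_le : ∀ α β : Ordinal.{u}, β ∈ C α → Ordinal.cof β ≤ Cardinal.aleph0
  coh : ∀ α β : Ordinal.{u}, β < omega2.{u} → IsLimPt (C β) α → C α = C β ∩ Set.Iio α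

/-- `rho` is Todorcevic's ρ function associated with the sequence `C`:
`ρ(α,α) = 0`, `ρ` takes values below `ω₁`, and for `α < β < ω₂`,
`ρ(α,β) = max({otp(C_β ∩ α), ρ(α, min(C_β \ α))} ∪ {ρ(ξ,α) : ξ ∈ C_β ∩ [Λ(α,β), α)})`. -/
structure RhoFun (C : Ordinal.{u} → Set Ordinal.{u})
    (rho : Ordinal.{u} → Ordinal.{u} → Ordinal.{u}) : Prop where
  refl : ∀ α : Ordinal.{u}, rho α α = 0
  lt_omega1 : ∀ α β : Ordinal.{u}, α ≤ β → β < omega2.{u} → rho α β < omega1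
  eq : ∀ α β : Ordinal.{u}, α < β → β < omega2.{u} →
    rho α β = sSup ({otp (C β ∩ Set.Iio α), rho α (sInf (C β ∩ Set.Ici α))} ∪
      (fun ξ => rho ξ α) '' (C β ∩ Set.Ico (Lam C α β) α))


namespace SqAux

open Cardinal

variable {s t : Set Ordinal.{u}} {β β' : Ordinal.{u}}

/-- bounded set of ordinals -/
def Bdd (s : Set Ordinal.{u}) : Prop := ∃ β, s ⊆ Iio β

theorem Bdd.mono (h : Bdd t) (hs : s ⊆ t) : Bdd s := by
  obtain ⟨β, hβ⟩ := h; exact ⟨β, hs.trans hβ⟩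

theorem bdd_Iio (β : Ordinal.{u}) : Bdd (Iio β) := ⟨β, le_refl _⟩

theorem type_Iio (β : Ordinal.{u}) :
    Ordinal.type (Subrel ((· < ·) : Ordinal.{u} → Ordinal.{u} → Prop) (· ∈ (Iio β)))
      = Ordinal.lift.{u+1} β :=
  typein_ordinal β

theorem otp_spec (hs : Bdd s) :
    Ordinal.lift.{u+1} (otp s)
      = Ordinal.type (Subrel ((· < ·) : Ordinal.{u} → Ordinal.{u} → Prop) (· ∈ s)) := by
  obtain ⟨β, hβ⟩ := hs
  have hemb : Subrel ((· < ·) : Ordinal.{u} → Ordinal.{u} → Prop) (· ∈ s) ↪r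
      Subrel ((· < ·) : Ordinal.{u} → Ordinal.{u} → Prop) (· ∈ Iio β) :=
    ⟨⟨fun x => ⟨x.1, hβ x.2⟩, fun x y h => by
      cases x; cases y; simpa [Subtype.ext_iff] using h⟩, Iff.rfl⟩
  have hle : Ordinal.type (Subrel ((· < ·) : Ordinal.{u} → Ordinal.{u} → Prop) (· ∈ s))
      ≤ Ordinal.lift.{u+1} β := by
    rw [← type_Iio β]; exact hemb.ordinal_type_le
  obtain ⟨o, ho⟩ := Ordinal.mem_range_lift_of_le hle
  have hex : ∃ o : Ordinal.{u}, Ordinal.lift.{u + 1, u} o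
      = @Ordinal.type s (Subrel (· < ·) (· ∈ s)) (by infer_instance) := ⟨o, ho⟩
  unfold otp
  rw [dif_pos hex]
  exact hex.choose_spec

theorem otp_eq_iff (hs : Bdd s) {o : Ordinal.{u}} :
    otp s = o ↔ Ordinal.type (Subrel ((· < ·) : Ordinal.{u} → Ordinal.{u} → Prop) (· ∈ s))
      = Ordinal.lift.{u+1} o := by
  rw [← otp_spec hs]
  constructor
  · rintro rfl; rfl
  · intro h; exact Ordinal.lift_inj.mp h

theorem otp_Iio (β : Ordinal.{u}) : otp (Iio β) = β :=
  (otp_eq_iff (bdd_Iio β)).mpr (type_Iio β)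

theorem otp_le_of_subset (ht : Bdd t) (hst : s ⊆ t) : otp s ≤ otp t := by
  rw [← Ordinal.lift_le.{u+1}, otp_spec (ht.mono hst), otp_spec ht]
  exact RelEmbedding.ordinal_type_le
    ⟨⟨fun x => ⟨x.1, hst x.2⟩, fun x y h => by
      cases x; cases y; simpa [Subtype.ext_iff] using h⟩, Iff.rfl⟩

theorem otp_lt_of_mem (hs : Bdd s) {x : Ordinal.{u}} (hx : x ∈ s) :
    otp (s ∩ Iio x) < otp s := by
  rw [← Ordinal.lift_lt.{u+1}, otp_spec (hs.mono inter_subset_left), otp_spec hs]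
  exact PrincipalSeg.ordinal_type_lt
    { toFun := fun y => ⟨y.1, y.2.1⟩
      inj' := fun y z h => by
        cases y; cases z; simpa [Subtype.ext_iff] using h
      map_rel_iff' := Iff.rfl
      top := ⟨x, hx⟩
      mem_range_iff_rel' := by
        rintro ⟨b, hb⟩
        constructor
        · rintro ⟨⟨a, ha⟩, heq⟩
          have : a = b := congrArg Subtype.val heq
          subst this; exact ha.2
        · intro hlt; exact ⟨⟨b, hb, hlt⟩, rfl⟩ }

theorem otp_card (hs : Bdd s) : #s = Cardinal.lift.{u+1} (otp s).card := by
  have := otp_spec hs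
  have hcard := congrArg Ordinal.card this
  rw [Ordinal.card_type] at hcard
  rw [← hcard, Ordinal.lift_card]

theorem countable_iff_otp_lt (hs : Bdd s) :
    s.Countable ↔ otp s < (Cardinal.aleph 1).ord := by
  have h1 : (Cardinal.aleph (1 : Ordinal.{u+1}))
      = Cardinal.lift.{u+1, u} (Cardinal.aleph (1 : Ordinal.{u})) := by
    rw [Cardinal.lift_aleph, Ordinal.lift_one]
  rw [Cardinal.countable_iff_lt_aleph_one, otp_card hs, h1, Cardinal.lift_lt, Cardinal.lt_ord]


theorem otp_congr (hs : Bdd s) (ht : Bdd t) {f : Ordinal.{u} → Ordinal.{u}}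
    (hbij : Set.BijOn f s t)
    (hmono : StrictMonoOn f s) : otp s = otp t := by
  have : Ordinal.lift.{u+1} (otp s) = Ordinal.lift.{u+1} (otp t) := by
    rw [otp_spec hs, otp_spec ht]
    refine Ordinal.type_eq.2 ⟨RelIso.mk (Set.BijOn.equiv f hbij) ?_⟩
    intro a b
    show f a.1 < f b.1 ↔ a.1 < b.1
    exact hmono.lt_iff_lt a.2 b.2
  exact Ordinal.lift_inj.mp this

theorem exists_enum (hs : Bdd s) :
    Nonempty (Subrel ((· < ·) : Ordinal.{u} → Ordinal.{u} → Prop) (· ∈ (Iio (otp s))) ≃r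
      Subrel ((· < ·) : Ordinal.{u} → Ordinal.{u} → Prop) (· ∈ s)) := by
  apply Ordinal.type_eq.1
  rw [type_Iio, otp_spec hs]

variable {γ : Ordinal.{u}}

theorem idx_enum (hs : Bdd s)
    (E : Subrel ((· < ·) : Ordinal.{u} → Ordinal.{u} → Prop) (· ∈ (Iio γ)) ≃r
      Subrel ((· < ·) : Ordinal.{u} → Ordinal.{u} → Prop) (· ∈ s)) (ξ : Iio γ) :
    otp (s ∩ Iio (E ξ : Ordinal)) = ξ.1 := by
  classical
  set f : Ordinal.{u} → Ordinal.{u} := fun ζ => if h : ζ < γ then (E ⟨ζ, h⟩ : Ordinal) else 0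
    with hf
  have hfval : ∀ (ζ) (h : ζ < γ), f ζ = (E ⟨ζ, h⟩ : Ordinal) := by
    intro ζ h; simp [hf, h]
  have hmono : StrictMonoOn f (Iio ξ.1) := by
    intro a ha b hb hab
    have ha' : a < γ := ha.trans ξ.2
    have hb' : b < γ := hb.trans ξ.2
    rw [hfval a ha', hfval b hb']
    exact E.map_rel_iff.2 hab
  have hbij : Set.BijOn f (Iio ξ.1) (s ∩ Iio (E ξ : Ordinal)) := by
    refine ⟨?_, hmono.injOn, ?_⟩
    · intro a ha
      have ha' : a < γ := ha.trans ξ.2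
      rw [hfval a ha']
      exact ⟨(E ⟨a, ha'⟩).2, E.map_rel_iff.2 ha⟩
    · intro y hy
      set ζ : Iio γ := E.symm ⟨y, hy.1⟩ with hζ
      have hEζ : (E ζ : Ordinal) = y := by rw [hζ, E.apply_symm_apply]
      have hζξ : ζ.1 < ξ.1 := by
        have : (E ζ : Ordinal) < (E ξ : Ordinal) := by rw [hEζ]; exact hy.2
        exact E.map_rel_iff.1 this
      exact ⟨ζ.1, hζξ, by rw [hfval ζ.1 ζ.2, Subtype.coe_eta, hEζ]⟩
  have := otp_congr (bdd_Iio ξ.1) (hs.mono inter_subset_left) hbij hmono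
  rw [← this, otp_Iio]

theorem idx_spec (hs : Bdd s)
    (E : Subrel ((· < ·) : Ordinal.{u} → Ordinal.{u} → Prop) (· ∈ (Iio γ)) ≃r
      Subrel ((· < ·) : Ordinal.{u} → Ordinal.{u} → Prop) (· ∈ s)) {x : Ordinal.{u}} (hx : x ∈ s) :
    ∃ ξ : Iio γ, ξ.1 = otp (s ∩ Iio x) ∧ (E ξ : Ordinal) = x := by
  refine ⟨E.symm ⟨x, hx⟩, ?_, by rw [E.apply_symm_apply]⟩
  have := idx_enum hs E (E.symm ⟨x, hx⟩)
  rw [E.apply_symm_apply] at this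
  exact this.symm

theorem idx_lt_idx (hs : Bdd s) {x y : Ordinal.{u}} (hx : x ∈ s) (hxy : x < y) :
    otp (s ∩ Iio x) < otp (s ∩ Iio y) := by
  have h1 : s ∩ Iio x = (s ∩ Iio y) ∩ Iio x := by
    ext z; constructor
    · rintro ⟨h1, h2⟩; exact ⟨⟨h1, h2.trans hxy⟩, h2⟩
    · rintro ⟨⟨h1, _⟩, h2⟩; exact ⟨h1, h2⟩
  rw [h1]
  exact otp_lt_of_mem (hs.mono inter_subset_left) ⟨hx, hxy⟩

theorem bddAbove_of_subset_Iio {δ : Ordinal.{u}} (h : s ⊆ Iio δ) : BddAbove s :=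
  ⟨δ, fun _ hy => le_of_lt (h hy)⟩

theorem isLimPt_iff {δ : Ordinal.{u}} :
    IsLimPt s δ ↔ 0 < δ ∧ ∀ ζ < δ, ∃ x ∈ s, ζ < x ∧ x < δ := by
  unfold IsLimPt
  constructor
  · rintro ⟨h0, hsup⟩
    refine ⟨h0, fun ζ hζ => ?_⟩
    have hne : (s ∩ Iio δ).Nonempty := by
      by_contra hemp
      rw [not_nonempty_iff_eq_empty.1 hemp] at hsup
      simp at hsup
      exact h0.ne' hsup.symm
    obtain ⟨x, hx, hlt⟩ := exists_lt_of_lt_csSup hne (hsup ▸ hζ)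
    exact ⟨x, hx.1, hlt, hx.2⟩
  · rintro ⟨h0, h⟩
    refine ⟨h0, le_antisymm ?_ ?_⟩
    · obtain ⟨x, hx, _, hxδ⟩ := h 0 h0
      exact csSup_le ⟨x, hx, hxδ⟩ fun y hy => le_of_lt hy.2
    · by_contra hlt
      push_neg at hlt
      obtain ⟨x, hx, hgt, hxδ⟩ := h _ hlt
      exact absurd (le_csSup (bddAbove_of_subset_Iio inter_subset_right) ⟨hx, hxδ⟩)
        (not_le.2 hgt)

theorem limPt_isLimit {δ : Ordinal.{u}} (h : IsLimPt s δ) : Order.IsSuccLimit δ := by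
  obtain ⟨h0, h⟩ := isLimPt_iff.1 h
  refine Ordinal.isSuccLimit_iff.2 ⟨h0.ne', Order.isSuccPrelimit_iff_succ_lt.2 fun a ha => ?_⟩
  obtain ⟨x, _, hax, hxδ⟩ := h a ha
  exact lt_of_le_of_lt (Order.succ_le_of_lt hax) hxδ

theorem isLimPt_inter_Iio {δ δ' : Ordinal.{u}} (h : δ ≤ δ') :
    IsLimPt (s ∩ Iio δ') δ ↔ IsLimPt s δ := by
  rw [isLimPt_iff, isLimPt_iff]
  constructor
  · rintro ⟨h0, hex⟩
    exact ⟨h0, fun ζ hζ => by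
      obtain ⟨x, hx, h1, h2⟩ := hex ζ hζ; exact ⟨x, hx.1, h1, h2⟩⟩
  · rintro ⟨h0, hex⟩
    refine ⟨h0, fun ζ hζ => ?_⟩
    obtain ⟨x, hx, h1, h2⟩ := hex ζ hζ
    exact ⟨x, ⟨hx, h2.trans_le h⟩, h1, h2⟩

theorem limPt_mono {δ : Ordinal.{u}} (h : IsLimPt s δ) (hst : s ⊆ t) : IsLimPt t δ := by
  rw [isLimPt_iff] at h ⊢
  exact ⟨h.1, fun ζ hζ => by
    obtain ⟨x, hx, h1, h2⟩ := h.2 ζ hζ; exact ⟨x, hst hx, h1, h2⟩⟩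

theorem limPt_le {δ β : Ordinal.{u}} (h : IsLimPt s δ) (hs : s ⊆ Iio β) : δ ≤ β := by
  obtain ⟨h0, hex⟩ := isLimPt_iff.1 h
  obtain ⟨x, hx, _, _⟩ := hex 0 h0
  rcases le_or_gt δ β with h' | h'
  · exact h'
  · obtain ⟨y, hy, h1, _⟩ := hex β h'
    exact absurd (hs hy) (not_lt.2 h1.le)

theorem lt_of_idx_lt (hs : Bdd s) {x y : Ordinal.{u}}
    (h : otp (s ∩ Iio x) < otp (s ∩ Iio y)) : x < y := by
  by_contra hyx
  push_neg at hyx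
  have hle : otp (s ∩ Iio y) ≤ otp (s ∩ Iio x) :=
    otp_le_of_subset (hs.mono inter_subset_left)
      (inter_subset_inter_right _ (Iio_subset_Iio hyx))
  exact absurd h (not_lt.2 hle)

theorem otp_pos_of_nonempty (hs : Bdd s) (h : s.Nonempty) : 0 < otp s := by
  rw [pos_iff_ne_zero]
  intro h0
  have hc := otp_card hs
  rw [h0] at hc
  simp only [Ordinal.card_zero, Cardinal.lift_zero, Cardinal.mk_eq_zero_iff] at hc
  obtain ⟨x, hx⟩ := h
  exact hc.false ⟨x, hx⟩

theorem otp_isLimit {α : Ordinal.{u}} (hs : s ⊆ Iio α) (hα : Order.IsSuccLimit α)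
    (hub : ∀ ζ < α, ∃ x ∈ s, ζ < x) : Order.IsSuccLimit (otp s) := by
  have hbdd : Bdd s := ⟨α, hs⟩
  have hne : s.Nonempty := by
    obtain ⟨x, hx, _⟩ := hub 0 hα.pos
    exact ⟨x, hx⟩
  refine Ordinal.isSuccLimit_iff.2 ⟨(otp_pos_of_nonempty hbdd hne).ne',
    Order.isSuccPrelimit_iff_succ_lt.2 fun a ha => ?_⟩
  obtain ⟨E⟩ := exists_enum hbdd
  set x : Ordinal.{u} := (E ⟨a, ha⟩ : Ordinal) with hxdef
  have hxs : x ∈ s := (E ⟨a, ha⟩).2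
  obtain ⟨y, hy, hxy⟩ := hub x (hs hxs)
  have h1 : otp (s ∩ Iio x) = a := idx_enum hbdd E ⟨a, ha⟩
  have h2 : otp (s ∩ Iio x) < otp (s ∩ Iio y) := idx_lt_idx hbdd hxs hxy
  have h3 : otp (s ∩ Iio y) < otp s := otp_lt_of_mem hbdd hy
  rw [h1] at h2
  exact lt_of_le_of_lt (Order.succ_le_of_lt h2) h3

theorem otp_le_omega1 (hs : Bdd s)
    (h : ∀ x ∈ s, (s ∩ Iio x).Countable) : otp s ≤ (Cardinal.aleph 1).ord := by
  by_contra h'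
  push_neg at h'
  obtain ⟨E⟩ := exists_enum hs
  set x : Ordinal.{u} := (E ⟨(Cardinal.aleph 1).ord, h'⟩ : Ordinal) with hxdef
  have hxs : x ∈ s := (E ⟨(Cardinal.aleph 1).ord, h'⟩).2
  have h1 : otp (s ∩ Iio x) = (Cardinal.aleph 1).ord := idx_enum hs E _
  have h2 : otp (s ∩ Iio x) < (Cardinal.aleph 1).ord :=
    (countable_iff_otp_lt (hs.mono inter_subset_left)).1 (h x hxs)
  rw [h1] at h2
  exact lt_irrefl _ h2

theorem countable_Iic_of_lt_omega1 {θ : Ordinal.{u}} (h : θ < (Cardinal.aleph 1).ord) :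
    (Iic θ).Countable := by
  have h1 : Iic θ = Iio (θ + 1) := by
    ext x; simp only [mem_Iic, mem_Iio, Order.lt_add_one_iff]
  rw [h1]
  apply (countable_iff_otp_lt (bdd_Iio _)).2
  rw [otp_Iio, Ordinal.add_one_eq_succ]
  exact (Cardinal.isSuccLimit_ord (Cardinal.aleph0_le_aleph 1)).succ_lt h

theorem cof_le_aleph0_of_sSup {A : Set Ordinal.{u}} {δ : Ordinal.{u}} (h0 : 0 < δ)
    (hsup : sSup A = δ) (hA : A ⊆ Iio δ) (hc : A.Countable) :
    Ordinal.cof δ ≤ Cardinal.aleph0 := by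
  have hne : A.Nonempty := by
    by_contra hemp
    rw [not_nonempty_iff_eq_empty.1 hemp] at hsup
    simp at hsup
    exact h0.ne' hsup.symm
  obtain ⟨g, hg⟩ := hc.exists_eq_range hne
  set f : ULift.{u} ℕ → Ordinal.{u} := fun n => g n.down with hf
  have hrange : Set.range f = A := by
    rw [hg]
    ext x
    constructor
    · rintro ⟨n, rfl⟩; exact ⟨n.down, rfl⟩
    · rintro ⟨n, rfl⟩; exact ⟨ULift.up n, rfl⟩
  have hsup2 : iSup f = δ := by
    rw [iSup, hrange, hsup]
  have hlt : ∀ i, f i < iSup f := by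
    intro i
    rw [hsup2]
    exact hA (hrange ▸ Set.mem_range_self i)
  have := Ordinal.cof_iSup_le hlt
  rw [hsup2] at this
  refine this.trans ?_
  rw [Cardinal.mk_uLift, Cardinal.mk_nat, Cardinal.lift_aleph0]

theorem card_le_aleph0_of_lt_omega1 {ξ : Ordinal.{u}} (h : ξ < (Cardinal.aleph 1).ord) :
    ξ.card ≤ Cardinal.aleph0 := by
  have := Cardinal.lt_ord.1 h
  rwa [← Cardinal.succ_aleph0, Order.lt_succ_iff] at this

/-- the image of `D` under the canonical enumeration of `C α`. -/
def Tset (C : Ordinal.{u} → Set Ordinal.{u}) (α : Ordinal.{u}) (D : Set Ordinal.{u}) :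
    Set Ordinal.{u} :=
  {x | x ∈ C α ∧ otp (C α ∩ Iio x) ∈ D}

/-- successors of members of `T` together with limit points of `T` below `α`. -/
def FixS (T : Set Ordinal.{u}) (α : Ordinal.{u}) : Set Ordinal.{u} :=
  ((fun x => x + 1) '' T) ∪ {δ | δ < α ∧ IsLimPt T δ}

/-- The refined square sequence. -/
def DD (C : Ordinal.{u} → Set Ordinal.{u}) : Ordinal.{u} → Set Ordinal.{u} :=
  Ordinal.lt_wf.fix fun α ih =>
    if h : omega1.{u} < α ∧ otp (C α) < α then
      Ioi omega1.{u} ∩ FixS (Tset C α (ih (otp (C α)) h.2)) α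
    else Iio α

theorem DD_def (C : Ordinal.{u} → Set Ordinal.{u}) (α : Ordinal.{u}) :
    DD C α = if h : omega1.{u} < α ∧ otp (C α) < α then
      Ioi omega1.{u} ∩ FixS (Tset C α (DD C (otp (C α)))) α
    else Iio α := by
  unfold DD
  rw [Ordinal.lt_wf.fix_eq]

theorem DD_base {C : Ordinal.{u} → Set Ordinal.{u}} {α : Ordinal.{u}} (h : α ≤ omega1.{u}) :
    DD C α = Iio α := by
  rw [DD_def, dif_neg]
  rintro ⟨h1, -⟩
  exact absurd h1 (not_lt.2 h)

theorem DD_rec {C : Ordinal.{u} → Set Ordinal.{u}} {α : Ordinal.{u}} (h1 : omega1.{u} < α)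
    (h2 : otp (C α) < α) :
    DD C α = Ioi omega1.{u} ∩ FixS (Tset C α (DD C (otp (C α)))) α := by
  rw [DD_def, dif_pos ⟨h1, h2⟩]

theorem mem_Tset {C : Ordinal.{u} → Set Ordinal.{u}} {α : Ordinal.{u}} {D : Set Ordinal.{u}}
    {x : Ordinal.{u}} :
    x ∈ Tset C α D ↔ x ∈ C α ∧ otp (C α ∩ Iio x) ∈ D := Iff.rfl

theorem mem_FixS {T : Set Ordinal.{u}} {α z : Ordinal.{u}} :
    z ∈ FixS T α ↔ z ∈ (fun x => x + 1) '' T ∨ (z < α ∧ IsLimPt T z) := Iff.rfl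

theorem DD_main (C : Ordinal.{u} → Set Ordinal.{u})
    (hclub : ∀ β : Ordinal.{u}, Order.IsSuccLimit β → omega1.{u} < β → β < omega2.{u} →
      IsClubIn (C β) β)
    (hotp : ∀ β : Ordinal.{u}, Order.IsSuccLimit β → omega1.{u} < β → β < omega2.{u} →
      otp (C β) < β)
    (hcoh : ∀ β : Ordinal.{u}, Order.IsSuccLimit β → omega1.{u} < β → β < omega2.{u} →
      ∀ α : Ordinal.{u}, IsLimPt (C β) α → omega1.{u} < α → C β ∩ Set.Iio α = C α) :
    ∀ α : Ordinal.{u}, Order.IsSuccLimit α → α < omega2.{u} →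
      IsClubIn (DD C α) α ∧ otp (DD C α) ≤ omega1.{u} ∧
      (Ordinal.cof α = Cardinal.aleph0 → otp (DD C α) < omega1.{u}) ∧
      (∀ ξ ∈ DD C α, Ordinal.cof ξ ≤ Cardinal.aleph0) ∧
      (∀ δ < α, IsLimPt (DD C α) δ → DD C α ∩ Set.Iio δ = DD C δ) := by
  intro α
  induction α using Ordinal.induction with
  | _ α IH =>
  intro hlim hα2
  rcases le_or_gt α omega1.{u} with hle | hgt
  · -- base case : α ≤ ω₁
    rw [DD_base hle]
    refine ⟨⟨fun x hx => hx, fun ξ hξ => ⟨ξ + 1, ?_, ?_⟩, fun δ hδ _ => hδ⟩, ?_, ?_, ?_, ?_⟩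
    · show ξ + 1 < α
      rw [Ordinal.add_one_eq_succ]; exact hlim.succ_lt hξ
    · rw [Ordinal.add_one_eq_succ]; exact Order.lt_succ ξ
    · rw [otp_Iio]; exact hle
    · intro hcof
      rw [otp_Iio]
      rcases lt_or_eq_of_le hle with h | h
      · exact h
      · exfalso
        rw [h] at hcof
        have hreg : Ordinal.cof omega1.{u} = Cardinal.aleph 1 :=
          Cardinal.isRegular_aleph_one.cof_eq
        rw [hreg] at hcof
        exact absurd hcof.symm Cardinal.aleph0_lt_aleph_one.ne
    · intro ξ hξ
      exact (Ordinal.cof_le_card ξ).trans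
        (card_le_aleph0_of_lt_omega1 (lt_of_lt_of_le hξ hle))
    · intro δ hδ _
      rw [Set.Iio_inter_Iio, min_eq_right hδ.le, DD_base ((hδ.trans_le hle).le)]
  · -- main case : ω₁ < α
    have hγα : otp (C α) < α := hotp α hlim hgt hα2
    obtain ⟨hCsub, hCub, hCcl⟩ := hclub α hlim hgt hα2
    have hCbdd : Bdd (C α) := ⟨α, hCsub⟩
    have hγlim : Order.IsSuccLimit (otp (C α)) := otp_isLimit hCsub hlim hCub
    have hγ2 : otp (C α) < omega2.{u} := hγα.trans hα2
    obtain ⟨⟨hDγsub, hDγub, hDγcl⟩, hDγotp, hDγcof, hDγmem, hDγcoh⟩ :=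
      IH (otp (C α)) hγα hγlim hγ2
    have hDeq : DD C α = Ioi omega1.{u} ∩ FixS (Tset C α (DD C (otp (C α)))) α :=
      DD_rec hgt hγα
    set T : Set Ordinal.{u} := Tset C α (DD C (otp (C α))) with hTdef
    have hTsubC : T ⊆ C α := fun x hx => (mem_Tset.1 hx).1
    have hTsub : T ⊆ Iio α := fun x hx => hCsub (hTsubC hx)
    have hTbdd : Bdd T := ⟨α, hTsub⟩
    obtain ⟨E⟩ := exists_enum hCbdd
    have hmemT : ∀ {j : Ordinal.{u}} (hj : j < otp (C α)),
        ((E ⟨j, hj⟩ : Ordinal) ∈ T ↔ j ∈ DD C (otp (C α))) := by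
      intro j hj
      have h1 : otp (C α ∩ Iio (E ⟨j, hj⟩ : Ordinal)) = j := idx_enum hCbdd E ⟨j, hj⟩
      constructor
      · intro h; rw [← h1]; exact (mem_Tset.1 h).2
      · intro h; exact mem_Tset.2 ⟨(E ⟨j, hj⟩).2, by rw [h1]; exact h⟩
    have hTub : ∀ ζ < α, ∃ x ∈ T, ζ < x := by
      intro ζ hζ
      obtain ⟨y, hy, hζy⟩ := hCub ζ hζ
      have hidxy : otp (C α ∩ Iio y) < otp (C α) := otp_lt_of_mem hCbdd hy
      obtain ⟨j, hjD, hjgt⟩ := hDγub _ hidxy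
      have hjγ : j < otp (C α) := hDγsub hjD
      refine ⟨(E ⟨j, hjγ⟩ : Ordinal), (hmemT hjγ).2 hjD, ?_⟩
      have h1 : otp (C α ∩ Iio (E ⟨j, hjγ⟩ : Ordinal)) = j := idx_enum hCbdd E _
      have hylt : y < (E ⟨j, hjγ⟩ : Ordinal) :=
        lt_of_idx_lt hCbdd (by rw [h1]; exact hjgt)
      exact hζy.trans hylt
    have hLP : ∀ δ, δ < α → IsLimPt T δ →
        δ ∈ C α ∧ IsLimPt (DD C (otp (C α))) (otp (C α ∩ Iio δ)) ∧
          otp (C α ∩ Iio δ) < otp (C α) := by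
      intro δ hδα hδ
      have hδC : IsLimPt (C α) δ := limPt_mono hδ hTsubC
      have hδmem : δ ∈ C α := hCcl δ hδα hδC
      have hξγ : otp (C α ∩ Iio δ) < otp (C α) := otp_lt_of_mem hCbdd hδmem
      refine ⟨hδmem, ?_, hξγ⟩
      obtain ⟨hδ0, hδbtw⟩ := isLimPt_iff.1 hδ
      rw [isLimPt_iff]
      constructor
      · obtain ⟨x, hxT, _, hxδ⟩ := hδbtw 0 hδ0
        exact lt_of_le_of_lt zero_le
          (idx_lt_idx hCbdd (hTsubC hxT) hxδ)
      · intro ζ hζ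
        have hζγ : ζ < otp (C α) := hζ.trans hξγ
        have hy : (E ⟨ζ, hζγ⟩ : Ordinal) < δ :=
          lt_of_idx_lt hCbdd (by rw [idx_enum hCbdd E ⟨ζ, hζγ⟩]; exact hζ)
        obtain ⟨x, hxT, hyx, hxδ⟩ := hδbtw _ hy
        refine ⟨otp (C α ∩ Iio x), (mem_Tset.1 hxT).2, ?_,
          idx_lt_idx hCbdd (hTsubC hxT) hxδ⟩
        have e1 : ζ = otp (C α ∩ Iio (E ⟨ζ, hζγ⟩ : Ordinal)) :=
          (idx_enum hCbdd E ⟨ζ, hζγ⟩).symm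
        rw [e1]
        exact idx_lt_idx hCbdd (E ⟨ζ, hζγ⟩).2 hyx
    have hTcl : ∀ δ, δ < α → IsLimPt T δ → δ ∈ T := by
      intro δ hδα hδ
      obtain ⟨hδmem, hξlp, hξγ⟩ := hLP δ hδα hδ
      exact mem_Tset.2 ⟨hδmem, hDγcl _ hξγ hξlp⟩
    have hmonoT : StrictMonoOn (fun x => otp (C α ∩ Iio x)) T :=
      fun x hx y _ hxy => idx_lt_idx hCbdd (hTsubC hx) hxy
    have hotpT : otp T = otp (DD C (otp (C α))) := by
      refine otp_congr hTbdd ⟨otp (C α), hDγsub⟩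
        ⟨fun x hx => (mem_Tset.1 hx).2, hmonoT.injOn, ?_⟩ hmonoT
      intro j hj
      have hjγ : j < otp (C α) := hDγsub hj
      exact ⟨(E ⟨j, hjγ⟩ : Ordinal), (hmemT hjγ).2 hj, idx_enum hCbdd E _⟩
    have hTcnt : ∀ z, z < α → (T ∩ Iio z).Countable ∧ otp (T ∩ Iio z) < omega1.{u} := by
      intro z hz
      obtain ⟨x₀, hx₀, hzx₀⟩ := hTub z hz
      have h1 : otp (T ∩ Iio z) ≤ otp (T ∩ Iio x₀) :=
        otp_le_of_subset (hTbdd.mono inter_subset_left)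
          (inter_subset_inter_right _ (Iio_subset_Iio hzx₀.le))
      have h2 : otp (T ∩ Iio x₀) < otp T := otp_lt_of_mem hTbdd hx₀
      have h3 : otp (T ∩ Iio z) < omega1.{u} :=
        lt_of_le_of_lt h1 (lt_of_lt_of_le h2 (by rw [hotpT]; exact hDγotp))
      exact ⟨(countable_iff_otp_lt (hTbdd.mono inter_subset_left)).2 h3, h3⟩
    rw [hDeq]
    have hDsub : Ioi omega1.{u} ∩ FixS T α ⊆ Iio α := by
      rintro z ⟨-, hz⟩
      rcases mem_FixS.1 hz with ⟨x, hxT, rfl⟩ | ⟨hzα, -⟩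
      · show x + 1 < α
        rw [Ordinal.add_one_eq_succ]; exact hlim.succ_lt (hTsub hxT)
      · exact hzα
    have hDub : ∀ ζ < α, ∃ η ∈ Ioi omega1.{u} ∩ FixS T α, ζ < η := by
      intro ζ hζ
      have hmax : max ζ omega1.{u} < α := max_lt hζ hgt
      obtain ⟨x, hxT, hgtx⟩ := hTub _ hmax
      have hxω : omega1.{u} < x := lt_of_le_of_lt (le_max_right _ _) hgtx
      have hxx1 : x < x + 1 := by rw [Ordinal.add_one_eq_succ]; exact Order.lt_succ x
      refine ⟨x + 1, ⟨hxω.trans hxx1, mem_FixS.2 (Or.inl ⟨x, hxT, rfl⟩)⟩, ?_⟩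
      exact lt_of_le_of_lt (le_max_left _ _) (hgtx.trans hxx1)
    have hDlpT : ∀ δ, 0 < δ →
        (∀ ζ < δ, ∃ z ∈ Ioi omega1.{u} ∩ FixS T α, ζ < z ∧ z < δ) →
        IsLimPt T δ ∧ omega1.{u} < δ := by
      intro δ hδ0 hbtw
      have hω : omega1.{u} < δ := by
        obtain ⟨z, hzD, -, hzδ⟩ := hbtw 0 hδ0
        exact lt_trans hzD.1 hzδ
      refine ⟨isLimPt_iff.2 ⟨hδ0, ?_⟩, hω⟩
      intro ζ hζ
      obtain ⟨z₁, hz₁D, hζz₁, hz₁δ⟩ := hbtw ζ hζ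
      obtain ⟨z₂, hz₂D, hz₁z₂, hz₂δ⟩ := hbtw z₁ hz₁δ
      rcases mem_FixS.1 hz₂D.2 with ⟨y, hyT, rfl⟩ | ⟨-, hz₂lp⟩
      · have hyy1 : y < y + 1 := by rw [Ordinal.add_one_eq_succ]; exact Order.lt_succ y
        have hz₂δ' : y + 1 < δ := hz₂δ
        have hz₁z₂' : z₁ < y + 1 := hz₁z₂
        refine ⟨y, hyT, ?_, hyy1.trans hz₂δ'⟩
        have hzy : z₁ ≤ y := by
          rw [Ordinal.add_one_eq_succ] at hz₁z₂'
          exact Order.lt_succ_iff.1 hz₁z₂'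
        exact lt_of_lt_of_le hζz₁ hzy
      · obtain ⟨x, hxT, hz₁x, hxz₂⟩ := (isLimPt_iff.1 hz₂lp).2 z₁ hz₁z₂
        exact ⟨x, hxT, hζz₁.trans hz₁x, hxz₂.trans hz₂δ⟩
    have hDcl : ∀ δ, δ < α → IsLimPt (Ioi omega1.{u} ∩ FixS T α) δ →
        δ ∈ Ioi omega1.{u} ∩ FixS T α := by
      intro δ hδα hδ
      obtain ⟨hδ0, hbtw⟩ := isLimPt_iff.1 hδ
      obtain ⟨hδT, hδω⟩ := hDlpT δ hδ0 hbtw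
      exact ⟨hδω, mem_FixS.2 (Or.inr ⟨hδα, hδT⟩)⟩
    have hDcnt : ∀ z, z < α → ((Ioi omega1.{u} ∩ FixS T α) ∩ Iio z).Countable := by
      intro z hz
      have hsucc : (((fun x => x + 1) '' T) ∩ Iio z).Countable := by
        have hsb : ((fun x => x + 1) '' T) ∩ Iio z ⊆ (fun x => x + 1) '' (T ∩ Iio z) := by
          rintro w ⟨⟨x, hxT, rfl⟩, hwz⟩
          have hxx1 : x < x + 1 := by rw [Ordinal.add_one_eq_succ]; exact Order.lt_succ x
          have hwz' : x + 1 < z := hwz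
          exact ⟨x, ⟨hxT, hxx1.trans hwz'⟩, rfl⟩
        exact (((hTcnt z hz).1.image _).mono hsb)
      have hlps : ({δ' | δ' < α ∧ IsLimPt T δ'} ∩ Iio z).Countable := by
        have hsm : StrictMonoOn (fun δ' => otp (T ∩ Iio δ'))
            ({δ' | δ' < α ∧ IsLimPt T δ'} ∩ Iio z) := by
          intro a ha b hb hab
          obtain ⟨x, hxT, hax, hxb⟩ := (isLimPt_iff.1 hb.1.2).2 a hab
          have e1 : otp (T ∩ Iio a) ≤ otp (T ∩ Iio x) :=
            otp_le_of_subset (hTbdd.mono inter_subset_left)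
              (inter_subset_inter_right _ (Iio_subset_Iio hax.le))
          exact lt_of_le_of_lt e1 (idx_lt_idx hTbdd hxT hxb)
        apply Set.countable_of_injective_of_countable_image hsm.injOn
        have himg : (fun δ' => otp (T ∩ Iio δ')) ''
            ({δ' | δ' < α ∧ IsLimPt T δ'} ∩ Iio z) ⊆ Iic (otp (T ∩ Iio z)) := by
          rintro w ⟨δ', hδ', rfl⟩
          exact otp_le_of_subset (hTbdd.mono inter_subset_left)
            (inter_subset_inter_right _ (Iio_subset_Iio hδ'.2.le))
        exact ((countable_Iic_of_lt_omega1 (hTcnt z hz).2).mono himg)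
      refine ((hsucc.union hlps).mono ?_)
      rintro w ⟨⟨-, hw⟩, hwz⟩
      rcases mem_FixS.1 hw with h | h
      · exact Or.inl ⟨h, hwz⟩
      · exact Or.inr ⟨h, hwz⟩
    have hDotp : otp (Ioi omega1.{u} ∩ FixS T α) ≤ omega1.{u} :=
      otp_le_omega1 ⟨α, hDsub⟩ (fun x hx => hDcnt x (hDsub hx))
    refine ⟨⟨hDsub, hDub, hDcl⟩, hDotp, ?_, ?_, ?_⟩
    · -- cofinality omega implies countable order type
      intro hcof
      obtain ⟨ι, f, hlsub, hcard⟩ := Ordinal.exists_lsub_cof α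
      rw [hcof] at hcard
      have hcntι : Countable ι := Cardinal.mk_le_aleph0_iff.1 hcard.le
      have hcover : (Ioi omega1.{u} ∩ FixS T α) ⊆
          ⋃ i, ((Ioi omega1.{u} ∩ FixS T α) ∩ Iio (f i + 1)) := by
        intro d hd
        have hdα : d < α := hDsub hd
        rw [← hlsub] at hdα
        obtain ⟨i, hi⟩ := Ordinal.lt_lsub_iff.1 hdα
        have : d < f i + 1 := by
          rw [Ordinal.add_one_eq_succ]; exact Order.lt_succ_iff.2 hi
        exact Set.mem_iUnion.2 ⟨i, hd, this⟩
      have hcnt : (Ioi omega1.{u} ∩ FixS T α).Countable := by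
        refine Set.Countable.mono hcover (Set.countable_iUnion fun i => ?_)
        apply hDcnt
        have h1 : f i < α := by rw [← hlsub]; exact Ordinal.lt_lsub f i
        rw [Ordinal.add_one_eq_succ]; exact hlim.succ_lt h1
      exact (countable_iff_otp_lt ⟨α, hDsub⟩).1 hcnt
    · rintro ξ ⟨-, hξ⟩
      rcases mem_FixS.1 hξ with ⟨x, hxT, rfl⟩ | ⟨hξα, hξlp⟩
      · show Ordinal.cof (x + 1) ≤ Cardinal.aleph0
        rw [Ordinal.add_one_eq_succ, Ordinal.cof_succ]; exact Cardinal.one_le_aleph0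
      · exact cof_le_aleph0_of_sSup hξlp.1 hξlp.2 inter_subset_right (hTcnt ξ hξα).1
    · -- coherence
      intro δ hδα hδ
      obtain ⟨hδ0, hbtw⟩ := isLimPt_iff.1 hδ
      obtain ⟨hδT, hδω⟩ := hDlpT δ hδ0 hbtw
      obtain ⟨hδC, hξlp, hξγ⟩ := hLP δ hδα hδT
      have hδlim : Order.IsSuccLimit δ := limPt_isLimit hδT
      have hδ2 : δ < omega2.{u} := hδα.trans hα2
      have hCδ : C α ∩ Iio δ = C δ := hcoh α hlim hgt hα2 δ (limPt_mono hδT hTsubC) hδω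
      have hotpδ : otp (C δ) = otp (C α ∩ Iio δ) := by rw [hCδ]
      have hγδ : otp (C δ) < δ := hotp δ hδlim hδω hδ2
      have hcohγ : DD C (otp (C α)) ∩ Iio (otp (C α ∩ Iio δ)) =
          DD C (otp (C α ∩ Iio δ)) := hDγcoh _ hξγ hξlp
      have hTδ : Tset C δ (DD C (otp (C δ))) = T ∩ Iio δ := by
        rw [hotpδ, ← hcohγ]
        ext x
        rw [mem_Tset]
        constructor
        · rintro ⟨hxCδ, hxmem⟩
          rw [← hCδ] at hxCδ
          have hxδ : x < δ := hxCδ.2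
          have hseg : C δ ∩ Iio x = C α ∩ Iio x := by
            rw [← hCδ, Set.inter_assoc, Set.Iio_inter_Iio, min_eq_right hxδ.le]
          rw [hseg] at hxmem
          exact ⟨mem_Tset.2 ⟨hxCδ.1, hxmem.1⟩, hxδ⟩
        · rintro ⟨hxT, hxδ⟩
          obtain ⟨hxC, hxD⟩ := mem_Tset.1 hxT
          have hxCδ : x ∈ C δ := by rw [← hCδ]; exact ⟨hxC, hxδ⟩
          have hseg : C δ ∩ Iio x = C α ∩ Iio x := by
            rw [← hCδ, Set.inter_assoc, Set.Iio_inter_Iio, min_eq_right hxδ.le]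
          rw [hseg]
          exact ⟨hxCδ, hxD, idx_lt_idx hCbdd hxC hxδ⟩
      rw [DD_rec hδω hγδ, hTδ]
      ext z
      simp only [Set.mem_inter_iff, Set.mem_Ioi, Set.mem_Iio]
      constructor
      · rintro ⟨⟨hzω, hzF⟩, hzδ⟩
        refine ⟨hzω, ?_⟩
        rcases mem_FixS.1 hzF with ⟨x, hxT, rfl⟩ | ⟨-, hzlp⟩
        · have hxx1 : x < x + 1 := by rw [Ordinal.add_one_eq_succ]; exact Order.lt_succ x
          have hzδ' : x + 1 < δ := hzδ
          exact mem_FixS.2 (Or.inl ⟨x, ⟨hxT, hxx1.trans hzδ'⟩, rfl⟩)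
        · exact mem_FixS.2 (Or.inr ⟨hzδ, (isLimPt_inter_Iio hzδ.le).2 hzlp⟩)
      · rintro ⟨hzω, hzF⟩
        rcases mem_FixS.1 hzF with ⟨x, ⟨hxT, hxδ⟩, rfl⟩ | ⟨hzδ, hzlp⟩
        · have hx1δ : x + 1 < δ := by
            rw [Ordinal.add_one_eq_succ]; exact hδlim.succ_lt hxδ
          exact ⟨⟨hzω, mem_FixS.2 (Or.inl ⟨x, hxT, rfl⟩)⟩, hx1δ⟩
        · exact ⟨⟨hzω, mem_FixS.2 (Or.inr ⟨hzδ.trans hδα,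
            (isLimPt_inter_Iio hzδ.le).1 hzlp⟩)⟩, hzδ⟩

end SqAux

/-- From a `□_{ω₁}`-sequence `⟨C_α : ω₁ < α < ω₂, α limit⟩` one obtains a sequence
`⟨D_α : 0 < α < ω₂, α limit⟩` such that each `D_α` is club in `α`, `otp(D_α) ≤ ω₁`
(and `< ω₁` if `cf(α) = ω`), every member of any `D_β` has cofinality at most `ω`,
and `D_β ∩ α = D_α` whenever `α` is a limit point of `D_β`. -/
theorem square_sequence_refinement (C : Ordinal.{u} → Set Ordinal.{u})
    (hclub : ∀ β : Ordinal.{u}, Order.IsSuccLimit β → omega1.{u} < β → β < omega2.{u} →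
      IsClubIn (C β) β)
    (hotp : ∀ β : Ordinal.{u}, Order.IsSuccLimit β → omega1.{u} < β → β < omega2.{u} →
      otp (C β) < β)
    (hcoh : ∀ β : Ordinal.{u}, Order.IsSuccLimit β → omega1.{u} < β → β < omega2.{u} →
      ∀ α : Ordinal.{u}, IsLimPt (C β) α → omega1.{u} < α → C β ∩ Set.Iio α = C α) :
    ∃ D : Ordinal.{u} → Set Ordinal.{u},
      (∀ α : Ordinal.{u}, Order.IsSuccLimit α → 0 < α → α < omega2.{u} →
        IsClubIn (D α) α) ∧
      (∀ α : Ordinal.{u}, Order.IsSuccLimit α → 0 < α → α < omega2.{u} →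
        otp (D α) ≤ omega1.{u}) ∧
      (∀ α : Ordinal.{u}, Order.IsSuccLimit α → 0 < α → α < omega2.{u} →
        Ordinal.cof α = Cardinal.aleph0 → otp (D α) < omega1.{u}) ∧
      (∀ β : Ordinal.{u}, Order.IsSuccLimit β → 0 < β → β < omega2.{u} →
        ∀ ξ ∈ D β, Ordinal.cof ξ ≤ Cardinal.aleph0) ∧
      (∀ β : Ordinal.{u}, Order.IsSuccLimit β → 0 < β → β < omega2.{u} →
        ∀ α : Ordinal.{u}, IsLimPt (D β) α → D β ∩ Set.Iio α = D α) := by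
  have H := SqAux.DD_main C hclub hotp hcoh
  refine ⟨SqAux.DD C, fun α h1 h2 h3 => (H α h1 h3).1, fun α h1 h2 h3 => (H α h1 h3).2.1,
    fun α h1 h2 h3 hc => (H α h1 h3).2.2.1 hc, fun β h1 h2 h3 => (H β h1 h3).2.2.2.1, ?_⟩
  intro β h1 h2 h3 α hα
  have hsub : SqAux.DD C β ⊆ Set.Iio β := (H β h1 h3).1.1
  have hαβ : α ≤ β := SqAux.limPt_le hα hsub
  rcases eq_or_lt_of_le hαβ with rfl | hlt
  · exact Set.inter_eq_left.2 hsub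
  · exact (H β h1 h3).2.2.2.2 α hlt hα
end
end

section
/- Assume α < β < ω₂, α is a limit ordinal, ν < ω₁, and the set {ξ < α : ρ(ξ, β) ≤ ν} is cofinal in α. Then ρ(α, β) ≤ ν. -/
open Ordinal Set

universe u

noncomputable section

/-! ### Auxiliary lemmas on order types of sets of ordinals -/

/-- The inclusion of a subset as a relation embedding for the induced order. -/
def TodRho.inclEmb {s t : Set Ordinal.{u}} (hst : s ⊆ t) :
    Subrel ((· < ·) : Ordinal.{u} → Ordinal.{u} → Prop) (· ∈ s) ↪r Subrel (· < ·) (· ∈ t) :=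
  ⟨⟨Set.inclusion hst, Set.inclusion_injective hst⟩, Iff.rfl⟩

namespace TodRho

theorem type_Iio' (β : Ordinal.{u}) :
    @Ordinal.type (Iio β) (Subrel (· < ·) (· ∈ Iio β)) (by infer_instance) = Ordinal.lift.{u+1, u} β := by
  have f : (Subrel ((· < ·) : Ordinal.{u} → Ordinal.{u} → Prop) (· ∈ Iio β)) ≃r
      ((· < ·) : β.ToType → β.ToType → Prop) := (ToType.mk (o := β)).toRelIsoLT
  have h := @RelIso.ordinal_lift_type_eq _ _ _ _ _ isWellOrder_lt f
  simp only [Ordinal.type_toType] at h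
  rw [Ordinal.lift_id'.{u, u+1}] at h
  exact h

theorem otp_spec {s : Set Ordinal.{u}} {β : Ordinal.{u}} (hs : s ⊆ Iio β) :
    Ordinal.lift.{u + 1, u} (otp s) = @Ordinal.type s (Subrel (· < ·) (· ∈ s)) (by infer_instance) := by
  have hle : @Ordinal.type s (Subrel (· < ·) (· ∈ s)) (by infer_instance) ≤ Ordinal.lift.{u+1,u} β := by
    rw [← type_Iio' β]
    exact (inclEmb hs).ordinal_type_le
  obtain ⟨o, ho⟩ := Ordinal.mem_range_lift_of_le hle
  have hex : ∃ o : Ordinal.{u},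
      Ordinal.lift.{u + 1, u} o = @Ordinal.type s (Subrel (· < ·) (· ∈ s)) (by infer_instance) := ⟨o, ho⟩
  rw [otp, dif_pos hex]
  exact hex.choose_spec

theorem otp_empty : otp (∅ : Set Ordinal.{u}) = 0 := by
  have h := otp_spec (s := (∅ : Set Ordinal.{u})) (β := 1) (by simp)
  rw [Ordinal.type_eq_zero_of_empty] at h
  rw [← Ordinal.lift_inj.{u+1}]
  simpa using h

theorem otp_mono {s t : Set Ordinal.{u}} {β : Ordinal.{u}} (hst : s ⊆ t) (ht : t ⊆ Iio β) :
    otp s ≤ otp t := by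
  have h1 := otp_spec (hst.trans ht)
  have h2 := otp_spec ht
  rw [← Ordinal.lift_le.{u+1}, h1, h2]
  exact (inclEmb hst).ordinal_type_le

theorem typein_subrel {s : Set Ordinal.{u}} {e : Ordinal.{u}} (he : e ∈ s) :
    Ordinal.typein (Subrel ((· < ·) : Ordinal.{u} → Ordinal.{u} → Prop) (· ∈ s)) ⟨e, he⟩ =
      @Ordinal.type (s ∩ Iio e : Set Ordinal.{u}) (Subrel (· < ·) (· ∈ s ∩ Iio e))
        (by infer_instance) := by
  rw [← Ordinal.type_subrel]
  refine RelIso.ordinal_type_eq ?_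
  exact {
    toFun := fun x => ⟨x.1.1, x.1.2, x.2⟩
    invFun := fun y => ⟨⟨y.1, y.2.1⟩, y.2.2⟩
    left_inv := fun x => rfl
    right_inv := fun y => rfl
    map_rel_iff' := Iff.rfl }

theorem otp_lt_of_mem {s : Set Ordinal.{u}} {β e : Ordinal.{u}} (hs : s ⊆ Iio β) (he : e ∈ s) :
    otp (s ∩ Iio e) < otp s := by
  rw [← Ordinal.lift_lt.{u+1}, otp_spec (fun x hx => hs hx.1), otp_spec hs, ← typein_subrel he]
  exact Ordinal.typein_lt_type _ _

theorem exists_otp_eq_of_lt {s : Set Ordinal.{u}} {β ν : Ordinal.{u}} (hs : s ⊆ Iio β)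
    (hν : ν < otp s) : ∃ e ∈ s, otp (s ∩ Iio e) = ν := by
  have h : Ordinal.lift.{u+1,u} ν < Ordinal.type (Subrel ((· < ·) : Ordinal.{u} → _ → Prop) (· ∈ s)) := by
    rw [← otp_spec hs]; exact Ordinal.lift_lt.2 hν
  obtain ⟨a, ha⟩ := Ordinal.typein_surj _ h
  refine ⟨a.1, a.2, ?_⟩
  rw [← Ordinal.lift_inj.{u+1}, otp_spec (fun x hx => hs hx.1)]
  rw [← typein_subrel a.2]
  exact ha

/-! ### Limit point lemmas -/

theorem limpt_nonempty {s : Set Ordinal.{u}} {δ : Ordinal.{u}} (h : IsLimPt s δ) :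
    (s ∩ Iio δ).Nonempty := by
  by_contra hne
  rw [not_nonempty_iff_eq_empty] at hne
  have h2 := h.2
  rw [hne, csSup_empty] at h2
  exact h.1.ne' (by simpa using h2.symm)

theorem limpt_le {s : Set Ordinal.{u}} {δ a : Ordinal.{u}} (h : IsLimPt s δ) (hs : s ⊆ Iic a) :
    δ ≤ a := by
  rw [← h.2]
  exact csSup_le' fun x hx => hs hx.1

theorem limpt_congr {s t : Set Ordinal.{u}} {δ : Ordinal.{u}} (hst : s ∩ Iio δ = t ∩ Iio δ) :
    IsLimPt s δ ↔ IsLimPt t δ := by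
  rw [IsLimPt, IsLimPt, hst]

theorem limpt_mono {s t : Set Ordinal.{u}} {δ : Ordinal.{u}} (hst : s ⊆ t) (h : IsLimPt s δ) :
    IsLimPt t δ := by
  refine ⟨h.1, le_antisymm (csSup_le' fun x hx => hx.2.le) ?_⟩
  calc δ = sSup (s ∩ Iio δ) := h.2.symm
  _ ≤ sSup (t ∩ Iio δ) := csSup_le_csSup ⟨δ, fun x hx => hx.2.le⟩ (limpt_nonempty h)
      (inter_subset_inter hst (subset_refl _))

theorem exists_mem_limpt {s : Set Ordinal.{u}} {δ η : Ordinal.{u}} (h : IsLimPt s δ)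
    (hη : η < δ) : ∃ x ∈ s, η < x ∧ x < δ := by
  obtain ⟨x, hx, hηx⟩ := exists_lt_of_lt_csSup (limpt_nonempty h) (by rw [h.2]; exact hη)
  exact ⟨x, hx.1, hηx, hx.2⟩

theorem limpt_sSup {s D : Set Ordinal.{u}} (hD : D.Nonempty) (hbd : BddAbove D)
    (h : ∀ d ∈ D, IsLimPt s d) : IsLimPt s (sSup D) := by
  constructor
  · obtain ⟨d, hd⟩ := hD
    exact lt_of_lt_of_le (h d hd).1 (le_csSup hbd hd)
  · refine le_antisymm (csSup_le' fun x hx => hx.2.le) ?_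
    refine csSup_le hD fun d hd => ?_
    refine le_of_forall_lt fun η hη => ?_
    obtain ⟨x, hxs, hηx, hxd⟩ := exists_mem_limpt (h d hd) hη
    have hxD : x < sSup D := lt_of_lt_of_le hxd (le_csSup hbd hd)
    exact lt_of_lt_of_le hηx (le_csSup ⟨sSup D, fun y hy => hy.2.le⟩ ⟨hxs, hxD⟩)

theorem limpt_singleton {s : Set Ordinal.{u}} {x δ : Ordinal.{u}} (hs : s ⊆ {x})
    (h : IsLimPt s δ) : False := by
  obtain ⟨y, hys, hyδ⟩ := limpt_nonempty h
  have hyx : y = x := hs hys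
  have : s ∩ Iio δ = {x} := by
    refine subset_antisymm (fun z hz => hs hz.1) ?_
    rintro z rfl
    exact hyx ▸ ⟨hys, hyδ⟩
  have h2 := h.2
  rw [this, csSup_singleton] at h2
  rw [h2] at hyx
  exact absurd hyδ (by rw [hyx]; exact lt_irrefl δ)

/-! ### Lam lemmas -/

theorem Lam_le {C : Ordinal.{u} → Set Ordinal.{u}} {α β : Ordinal.{u}} : Lam C α β ≤ α :=
  csSup_le' fun _ hd => limpt_le hd inter_subset_right

theorem le_Lam {C : Ordinal.{u} → Set Ordinal.{u}} {α β δ : Ordinal.{u}}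
    (h : IsLimPt (C β ∩ Iic α) δ) : δ ≤ Lam C α β :=
  le_csSup ⟨α, fun _ hd => limpt_le hd inter_subset_right⟩ h

theorem Lam_limpt {C : Ordinal.{u} → Set Ordinal.{u}} {α β : Ordinal.{u}}
    (h : Lam C α β ≠ 0) : IsLimPt (C β ∩ Iic α) (Lam C α β) := by
  have hD : {δ | IsLimPt (C β ∩ Iic α) δ}.Nonempty := by
    by_contra hne
    rw [not_nonempty_iff_eq_empty] at hne
    rw [Lam, hne, csSup_empty] at h
    simp at h
  exact limpt_sSup hD ⟨α, fun _ hd => limpt_le hd inter_subset_right⟩ (fun d hd => hd) 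

/-! ### Structural lemmas about square sequences -/

variable {C : Ordinal.{u} → Set Ordinal.{u}} {rho : Ordinal.{u} → Ordinal.{u} → Ordinal.{u}}

theorem C_subset_Iio (hC : SqSeq C) {β : Ordinal.{u}} (hβ : β < omega2.{u}) :
    C β ⊆ Iio β := by
  rcases Ordinal.zero_or_succ_or_isSuccLimit β with h0 | ⟨δ, rfl⟩ | hlim
  · rw [h0, hC.zero]; simp
  · rw [← Ordinal.add_one_eq_succ, hC.succ]
    rintro x hx
    simp only [mem_singleton_iff] at hx
    rw [hx, mem_Iio, Ordinal.add_one_eq_succ]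
    exact Order.lt_succ δ
  · exact (hC.club β hβ hlim).1

theorem nxt_nonempty (hC : SqSeq C) {α β : Ordinal.{u}} (hαβ : α < β) (hβ : β < omega2.{u}) :
    (C β ∩ Ici α).Nonempty := by
  rcases Ordinal.zero_or_succ_or_isSuccLimit β with h0 | ⟨δ, rfl⟩ | hlim
  · exact absurd (h0 ▸ hαβ) not_lt_zero
  · refine ⟨δ, ?_⟩
    rw [← Ordinal.add_one_eq_succ, hC.succ]
    rw [Order.lt_succ_iff] at hαβ
    exact ⟨rfl, hαβ⟩
  · obtain ⟨η, hη, hαη⟩ := (hC.club β hβ hlim).2.1 α hαβ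
    exact ⟨η, hη, hαη.le⟩

theorem nxt_mem (hC : SqSeq C) {α β : Ordinal.{u}} (hαβ : α < β) (hβ : β < omega2.{u}) :
    sInf (C β ∩ Ici α) ∈ C β ∩ Ici α :=
  csInf_mem (nxt_nonempty hC hαβ hβ)

theorem nxt_lt (hC : SqSeq C) {α β : Ordinal.{u}} (hαβ : α < β) (hβ : β < omega2.{u}) :
    sInf (C β ∩ Ici α) < β :=
  C_subset_Iio hC hβ (nxt_mem hC hαβ hβ).1

/-! ### Component lemmas for rho -/

theorem rho_bddAbove (hC : SqSeq C) (hrho : RhoFun C rho) {α β : Ordinal.{u}}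
    (hαβ : α < β) (hβ : β < omega2.{u}) :
    BddAbove ({otp (C β ∩ Set.Iio α), rho α (sInf (C β ∩ Set.Ici α))} ∪
      (fun ξ => rho ξ α) '' (C β ∩ Set.Ico (Lam C α β) α)) := by
  refine ⟨otp (C β ∩ Set.Iio α) ⊔ omega1.{u}, ?_⟩
  rintro x (hx | ⟨ξ, hξ, rfl⟩)
  · rcases hx with rfl | rfl
    · exact le_sup_left
    · refine le_sup_of_le_right (hrho.lt_omega1 _ _ (nxt_mem hC hαβ hβ).2
        (lt_trans (nxt_lt hC hαβ hβ) hβ)).le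
  · exact le_sup_of_le_right
      (hrho.lt_omega1 ξ α hξ.2.2.le (lt_trans hαβ hβ)).le

theorem otp_le_rho (hC : SqSeq C) (hrho : RhoFun C rho) {α β : Ordinal.{u}}
    (hαβ : α < β) (hβ : β < omega2.{u}) : otp (C β ∩ Set.Iio α) ≤ rho α β := by
  rw [hrho.eq α β hαβ hβ]
  exact le_csSup (rho_bddAbove hC hrho hαβ hβ) (mem_union_left _ (mem_insert _ _))

theorem rho_nxt_le_rho (hC : SqSeq C) (hrho : RhoFun C rho) {α β : Ordinal.{u}}
    (hαβ : α < β) (hβ : β < omega2.{u}) : rho α (sInf (C β ∩ Set.Ici α)) ≤ rho α β := by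
  rw [hrho.eq α β hαβ hβ]
  exact le_csSup (rho_bddAbove hC hrho hαβ hβ)
    (mem_union_left _ (mem_insert_of_mem _ rfl))

theorem rho_im_le_rho (hC : SqSeq C) (hrho : RhoFun C rho) {α β ξ : Ordinal.{u}}
    (hαβ : α < β) (hβ : β < omega2.{u}) (hξ : ξ ∈ C β ∩ Set.Ico (Lam C α β) α) :
    rho ξ α ≤ rho α β := by
  rw [hrho.eq α β hαβ hβ]
  exact le_csSup (rho_bddAbove hC hrho hαβ hβ) (mem_union_right _ ⟨ξ, hξ, rfl⟩)

theorem rho_le_of_comps (hrho : RhoFun C rho) {α β ν : Ordinal.{u}}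
    (hαβ : α < β) (hβ : β < omega2.{u})
    (h1 : otp (C β ∩ Set.Iio α) ≤ ν)
    (h2 : rho α (sInf (C β ∩ Set.Ici α)) ≤ ν)
    (h3 : ∀ ξ ∈ C β ∩ Set.Ico (Lam C α β) α, rho ξ α ≤ ν) :
    rho α β ≤ ν := by
  rw [hrho.eq α β hαβ hβ]
  refine csSup_le' ?_
  rintro x (hx | ⟨ξ, hξ, rfl⟩)
  · rcases hx with rfl | rfl
    · exact h1
    · exact h2
  · exact h3 ξ hξ

/-! ### rho at successors -/

theorem Lam_succ (hC : SqSeq C) {α δ : Ordinal.{u}} : Lam C α (δ + 1) = 0 := by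
  by_contra h
  exact limpt_singleton (x := δ) (by rw [hC.succ]; exact inter_subset_left) (Lam_limpt h)

theorem rho_succ (hC : SqSeq C) (hrho : RhoFun C rho) {α δ : Ordinal.{u}}
    (hαδ : α ≤ δ) (hδ : δ + 1 < omega2.{u}) : rho α (δ + 1) = rho α δ := by
  have hempty : C (δ + 1) ∩ Set.Iio α = ∅ := by
    rw [hC.succ]
    ext x
    simp only [mem_inter_iff, mem_singleton_iff, mem_Iio, mem_empty_iff_false, iff_false]
    rintro ⟨rfl, h⟩
    exact absurd hαδ (not_le.2 h)
  have hsInf : sInf (C (δ + 1) ∩ Set.Ici α) = δ := by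
    rw [hC.succ]
    have : ({δ} : Set Ordinal.{u}) ∩ Set.Ici α = {δ} := by
      refine inter_eq_left.2 ?_
      rintro x rfl
      exact hαδ
    rw [this, csInf_singleton]
  have him : C (δ + 1) ∩ Set.Ico (Lam C α (δ + 1)) α = ∅ := by
    rw [hC.succ]
    ext x
    simp only [mem_inter_iff, mem_singleton_iff, mem_Ico, mem_empty_iff_false, iff_false]
    rintro ⟨rfl, _, h⟩
    exact absurd hαδ (not_le.2 h)
  have hlt : δ < δ + 1 := by
    rw [Ordinal.add_one_eq_succ]
    exact Order.lt_succ δ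
  rw [hrho.eq α (δ + 1) (lt_of_le_of_lt hαδ hlt) hδ, hempty, hsInf, him,
    otp_empty, image_empty, union_empty, csSup_pair]
  exact sup_eq_right.2 (zero_le)

/-! ### Coherence of rho at limit points -/

theorem rho_coh (hC : SqSeq C) (hrho : RhoFun C rho) {α l γ : Ordinal.{u}}
    (hγ : γ < omega2.{u}) (hl : l < γ) (hαl : α < l) (hlim : IsLimPt (C γ) l) :
    rho α γ = rho α l := by
  have hCl : C l = C γ ∩ Set.Iio l := hC.coh l γ hγ hlim
  have e1 : C l ∩ Set.Iio α = C γ ∩ Set.Iio α := by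
    rw [hCl]
    ext x
    simp only [mem_inter_iff, mem_Iio]
    exact ⟨fun h => ⟨h.1.1, h.2⟩, fun h => ⟨⟨h.1, h.2.trans hαl⟩, h.2⟩⟩
  have e2 : C l ∩ Set.Iic α = C γ ∩ Set.Iic α := by
    rw [hCl]
    ext x
    simp only [mem_inter_iff, mem_Iio, mem_Iic]
    exact ⟨fun h => ⟨h.1.1, h.2⟩, fun h => ⟨⟨h.1, lt_of_le_of_lt h.2 hαl⟩, h.2⟩⟩
  have e3 : Lam C α l = Lam C α γ := by
    rw [Lam, Lam, e2]
  have e4 : C l ∩ Set.Ico (Lam C α l) α = C γ ∩ Set.Ico (Lam C α γ) α := by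
    rw [e3, hCl]
    ext x
    simp only [mem_inter_iff, mem_Iio, mem_Ico]
    exact ⟨fun h => ⟨h.1.1, h.2⟩, fun h => ⟨⟨h.1, h.2.2.trans hαl⟩, h.2⟩⟩
  have e5 : sInf (C l ∩ Set.Ici α) = sInf (C γ ∩ Set.Ici α) := by
    obtain ⟨c, hc, hαc, hcl⟩ := exists_mem_limpt hlim hαl
    have hne : (C γ ∩ Set.Ici α).Nonempty := ⟨c, hc, hαc.le⟩
    have hm : sInf (C γ ∩ Set.Ici α) ∈ C γ ∩ Set.Ici α := csInf_mem hne
    have hmc : sInf (C γ ∩ Set.Ici α) ≤ c := csInf_le (OrderBot.bddBelow _) ⟨hc, hαc.le⟩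
    have hmem : sInf (C γ ∩ Set.Ici α) ∈ C l ∩ Set.Ici α := by
      rw [hCl]
      exact ⟨⟨hm.1, lt_of_le_of_lt hmc hcl⟩, hm.2⟩
    refine le_antisymm (csInf_le (OrderBot.bddBelow _) hmem)
      (csInf_le_csInf (OrderBot.bddBelow _) ⟨_, hmem⟩ ?_)
    rw [hCl]
    exact fun x hx => ⟨hx.1.1, hx.2⟩
  rw [hrho.eq α γ (hαl.trans hl) hγ, hrho.eq α l hαl (hl.trans hγ), e1, e5, e4]

/-! ### Lam comparison lemmas -/

theorem Lam_mono {α β γ : Ordinal.{u}} (hαβ : α ≤ β) : Lam C α γ ≤ Lam C β γ := by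
  refine csSup_le' fun d hd => le_Lam ?_
  exact limpt_mono (inter_subset_inter (subset_refl _) (Iic_subset_Iic.2 hαβ)) hd

theorem Lam_eq {α β γ : Ordinal.{u}} (hαβ : α ≤ β) (h : Lam C β γ ≤ α) :
    Lam C α γ = Lam C β γ := by
  refine le_antisymm (Lam_mono hαβ) ?_
  rcases eq_or_ne (Lam C β γ) 0 with h0 | h0
  · rw [h0]; exact zero_le
  · refine le_Lam ?_
    have hlp := Lam_limpt h0
    refine (limpt_congr ?_).1 hlp
    ext x
    simp only [mem_inter_iff, mem_Iic, mem_Iio]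
    constructor
    · rintro ⟨⟨h1, _⟩, h3⟩
      exact ⟨⟨h1, le_of_lt (lt_of_lt_of_le h3 h)⟩, h3⟩
    · rintro ⟨⟨h1, h2⟩, h3⟩
      exact ⟨⟨h1, h2.trans hαβ⟩, h3⟩

/-! ### Subadditivity of rho -/

theorem subadd (hC : SqSeq C) (hrho : RhoFun C rho) :
    ∀ γ : Ordinal.{u}, γ < omega2.{u} → ∀ α β : Ordinal.{u}, α ≤ β → β ≤ γ →
      rho α γ ≤ max (rho α β) (rho β γ) ∧ rho α β ≤ max (rho α γ) (rho β γ) := by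
  intro γ
  induction γ using Ordinal.induction with
  | h γ IH =>
  intro hγ α β hαβle hβγle
  rcases eq_or_lt_of_le hαβle with rfl | hαβ
  · exact ⟨le_max_right _ _, by rw [hrho.refl]; exact zero_le⟩
  rcases eq_or_lt_of_le hβγle with rfl | hβγ
  · exact ⟨le_max_left _ _, le_max_left _ _⟩
  have hβω : β < omega2.{u} := hβγ.trans hγ
  have hαγ : α < γ := hαβ.trans hβγ
  rcases Ordinal.zero_or_succ_or_isSuccLimit γ with h0 | ⟨δ, rfl⟩ | hγlim
  · exact absurd (h0 ▸ hβγ) not_lt_zero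
  · -- successor case
    have hsucc : Order.succ δ = δ + 1 := (Ordinal.add_one_eq_succ δ).symm
    rw [hsucc] at hγ hβγ ⊢
    have hβδ : β ≤ δ := by
      have := hβγ
      rw [Ordinal.add_one_eq_succ, Order.lt_succ_iff] at this
      exact this
    have hδγ : δ < Order.succ δ := Order.lt_succ δ
    have hδω : δ < omega2.{u} := by
      refine lt_trans ?_ hγ
      rw [← hsucc]; exact hδγ
    have e1 : rho α (δ + 1) = rho α δ := rho_succ hC hrho (hαβ.le.trans hβδ) hγ
    have e2 : rho β (δ + 1) = rho β δ := rho_succ hC hrho hβδ hγ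
    rw [e1, e2]
    rcases eq_or_lt_of_le hβδ with rfl | hβδlt
    · exact ⟨le_max_left _ _, le_max_left _ _⟩
    · exact IH δ hδγ hδω α β hαβle hβδlt.le
  -- limit case
  have hclub := hC.club γ hγ hγlim
  have hΛβ : Lam C β γ ≤ β := Lam_le
  by_cases hcase : Lam C β γ ≤ α
  · -- Case: Λ(β,γ) ≤ α
    have hΛeq : Lam C α γ = Lam C β γ := Lam_eq hαβ.le hcase
    set δ := sInf (C γ ∩ Set.Ici α) with hδdef
    have hδmem := nxt_mem hC hαγ hγ
    have hδγ : δ < γ := nxt_lt hC hαγ hγ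
    have hδω : δ < omega2.{u} := hδγ.trans hγ
    have hαδ : α ≤ δ := hδmem.2
    -- facts depending on position of δ relative to β
    have hkey : rho α δ ≤ max (rho α β) (rho β γ) ∧
        (rho α β ≤ max (rho α δ) (rho β γ)) := by
      rcases lt_or_ge δ β with hδβ | hβδ
      · -- δ < β : δ ∈ F(β,γ)
        have hδF : δ ∈ C γ ∩ Set.Ico (Lam C β γ) β := ⟨hδmem.1, hcase.trans hαδ, hδβ⟩
        have hρδβ : rho δ β ≤ rho β γ := rho_im_le_rho hC hrho hβγ hγ hδF
        rcases eq_or_lt_of_le hαδ with heq | hαδlt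
        · constructor
          · rw [← heq, hrho.refl]; exact zero_le
          · rw [heq]; exact le_max_of_le_right hρδβ
        · have hIH := IH β hβγ hβω α δ hαδlt.le hδβ.le
          constructor
          · -- (ii) at (α,δ,β): rho α δ ≤ max (rho α β) (rho δ β)
            refine hIH.2.trans ?_
            exact max_le (le_max_left _ _) (le_max_of_le_right hρδβ)
          · -- (i) at (α,δ,β): rho α β ≤ max (rho α δ) (rho δ β)
            refine hIH.1.trans ?_
            exact max_le (le_max_left _ _) (le_max_of_le_right hρδβ)
      · -- β ≤ δ : δ = min(C γ \ β)
        have hδ2 : sInf (C γ ∩ Set.Ici β) = δ := by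
          refine le_antisymm (csInf_le (OrderBot.bddBelow _) ⟨hδmem.1, hβδ⟩) ?_
          refine csInf_le_csInf (OrderBot.bddBelow _) (nxt_nonempty hC hβγ hγ) ?_
          exact inter_subset_inter (subset_refl _) (Ici_subset_Ici.2 hαβ.le)
        have hρβδ : rho β δ ≤ rho β γ := by
          have := rho_nxt_le_rho hC hrho hβγ hγ
          rwa [hδ2] at this
        rcases eq_or_lt_of_le hβδ with rfl | hβδlt
        · exact ⟨le_max_left _ _, le_max_left _ _⟩
        · have hIH := IH δ hδγ hδω α β hαβ.le hβδlt.le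
          constructor
          · -- (i) at (α,β,δ): rho α δ ≤ max (rho α β) (rho β δ)
            refine hIH.1.trans ?_
            exact max_le (le_max_left _ _) (le_max_of_le_right hρβδ)
          · -- (ii) at (α,β,δ): rho α β ≤ max (rho α δ) (rho β δ)
            refine hIH.2.trans ?_
            exact max_le (le_max_left _ _) (le_max_of_le_right hρβδ)
    constructor
    · -- inequality (i): rho α γ ≤ max (rho α β) (rho β γ)
      refine rho_le_of_comps hrho hαγ hγ ?_ ?_ ?_
      · refine le_trans (otp_mono (inter_subset_inter (subset_refl _)
          (Iio_subset_Iio hαβ.le)) (fun x hx => C_subset_Iio hC hγ hx.1)) ?_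
        exact le_max_of_le_right (otp_le_rho hC hrho hβγ hγ)
      · exact hkey.1
      · intro ξ hξ
        rw [hΛeq] at hξ
        have hξF : ξ ∈ C γ ∩ Set.Ico (Lam C β γ) β :=
          ⟨hξ.1, hξ.2.1, hξ.2.2.trans hαβ⟩
        have hρξβ : rho ξ β ≤ rho β γ := rho_im_le_rho hC hrho hβγ hγ hξF
        have hIH := (IH β hβγ hβω ξ α hξ.2.2.le hαβ.le).2
        refine hIH.trans (max_le (le_max_of_le_right hρξβ) (le_max_left _ _))
    · -- inequality (ii): rho α β ≤ max (rho α γ) (rho β γ)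
      have hραδ : rho α δ ≤ rho α γ := rho_nxt_le_rho hC hrho hαγ hγ
      refine hkey.2.trans (max_le (le_max_of_le_left hραδ) (le_max_right _ _))
  · -- Case: α < Λ(β,γ)
    push_neg at hcase
    have hΛ0 : Lam C β γ ≠ 0 := by
      intro h
      rw [h] at hcase
      exact absurd hcase not_lt_zero
    have hΛlimpt : IsLimPt (C γ) (Lam C β γ) := limpt_mono inter_subset_left (Lam_limpt hΛ0)
    have hΛγ : Lam C β γ < γ := lt_of_le_of_lt hΛβ hβγ
    have hΛω : Lam C β γ < omega2.{u} := hΛγ.trans hγ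
    have hcoh : rho α γ = rho α (Lam C β γ) := rho_coh hC hrho hγ hΛγ hcase hΛlimpt
    rcases eq_or_lt_of_le hΛβ with heq | hΛβlt
    · rw [hcoh, heq]
      exact ⟨le_max_left _ _, le_max_left _ _⟩
    · have hΛmem : Lam C β γ ∈ C γ := hclub.2.2 _ hΛγ hΛlimpt
      have hρΛβ : rho (Lam C β γ) β ≤ rho β γ :=
        rho_im_le_rho hC hrho hβγ hγ ⟨hΛmem, le_rfl, hΛβlt⟩
      have hIH := IH β hβγ hβω α (Lam C β γ) hcase.le hΛβlt.le
      constructor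
      · rw [hcoh]
        refine hIH.2.trans (max_le (le_max_left _ _) (le_max_of_le_right hρΛβ))
      · refine hIH.1.trans ?_
        rw [← hcoh]
        exact max_le (le_max_left _ _) (le_max_of_le_right hρΛβ)

/-! ### The main lemma -/

theorem main_aux (hC : SqSeq C) (hrho : RhoFun C rho) :
    ∀ β : Ordinal.{u}, β < omega2.{u} → ∀ α ν : Ordinal.{u}, α < β → Order.IsSuccLimit α →
      ν < omega1.{u} → (∀ η < α, ∃ ξ, η ≤ ξ ∧ ξ < α ∧ rho ξ β ≤ ν) → rho α β ≤ ν := by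
  intro β
  induction β using Ordinal.induction with
  | h β IH =>
  intro hβ α ν hαβ hα hν hcof
  rcases Ordinal.zero_or_succ_or_isSuccLimit β with h0 | ⟨δ, rfl⟩ | hβlim
  · exact absurd (h0 ▸ hαβ) not_lt_zero
  · -- successor case
    have hsucc : Order.succ δ = δ + 1 := (Ordinal.add_one_eq_succ δ).symm
    rw [hsucc] at hβ hαβ ⊢
    have hαδ : α ≤ δ := by
      have := hαβ
      rw [Ordinal.add_one_eq_succ, Order.lt_succ_iff] at this
      exact this
    rw [rho_succ hC hrho hαδ hβ]
    rcases eq_or_lt_of_le hαδ with heq | hαδlt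
    · rw [← heq, hrho.refl]; exact zero_le
    · have hδβ : δ < Order.succ δ := Order.lt_succ δ
      have hδω : δ < omega2.{u} := by
        refine lt_trans ?_ hβ
        rw [← hsucc]; exact hδβ
      refine IH δ hδβ hδω α ν hαδlt hα hν fun η hη => ?_
      obtain ⟨ξ, hηξ, hξα, hξν⟩ := hcof η hη
      refine ⟨ξ, hηξ, hξα, ?_⟩
      rw [← rho_succ hC hrho (le_of_lt (hξα.trans_le hαδ)) hβ]
      exact hξν
  -- limit case
  have hclub := hC.club β hβ hβlim
  have hCIio : C β ∩ Set.Iio α ⊆ Iio β := fun x hx => C_subset_Iio hC hβ hx.1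
  -- the otp component is always ≤ ν
  have hotp : otp (C β ∩ Set.Iio α) ≤ ν := by
    by_contra hlt
    push_neg at hlt
    obtain ⟨e, he, hee⟩ := exists_otp_eq_of_lt hCIio hlt
    obtain ⟨ξ, hηξ, hξα, hξν⟩ := hcof (Order.succ e) (hα.succ_lt he.2)
    have heξ : e < ξ := Order.succ_le_iff.1 hηξ
    have hsets : (C β ∩ Set.Iio ξ) ∩ Set.Iio e = (C β ∩ Set.Iio α) ∩ Set.Iio e := by
      ext x
      simp only [mem_inter_iff, mem_Iio]
      exact ⟨fun h => ⟨⟨h.1.1, h.2.trans (heξ.trans hξα)⟩, h.2⟩,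
        fun h => ⟨⟨h.1.1, h.2.trans heξ⟩, h.2⟩⟩
    have hlt2 : ν < otp (C β ∩ Set.Iio ξ) := by
      rw [← hee, ← hsets]
      exact otp_lt_of_mem (fun x hx => C_subset_Iio hC hβ hx.1) ⟨he.1, heξ⟩
    exact absurd (hlt2.trans_le ((otp_le_rho hC hrho (hξα.trans hαβ) hβ).trans hξν)) (lt_irrefl ν)
  by_cases hsup : sSup (C β ∩ Set.Iio α) = α
  · -- Case A : α is a limit point of C β
    have hlimpt : IsLimPt (C β) α := ⟨hα.pos, hsup⟩
    have hmem : α ∈ C β := hclub.2.2 α hαβ hlimpt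
    have hsInf : sInf (C β ∩ Set.Ici α) = α :=
      le_antisymm (csInf_le (OrderBot.bddBelow _) ⟨hmem, Set.mem_Ici.2 le_rfl⟩)
        (le_csInf ⟨α, hmem, Set.mem_Ici.2 le_rfl⟩ fun b hb => hb.2)
    refine rho_le_of_comps hrho hαβ hβ hotp ?_ ?_
    · rw [hsInf, hrho.refl]; exact zero_le
    · intro ξ hξ
      have hLam : Lam C α β = α := by
        refine le_antisymm Lam_le (le_Lam ⟨hα.pos, ?_⟩)
        have : C β ∩ Set.Iic α ∩ Set.Iio α = C β ∩ Set.Iio α := by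
          ext x
          simp only [mem_inter_iff, mem_Iic, mem_Iio]
          exact ⟨fun h => ⟨h.1.1, h.2⟩, fun h => ⟨⟨h.1, h.2.le⟩, h.2⟩⟩
        rw [this, hsup]
      rw [hLam] at hξ
      exact absurd (lt_of_le_of_lt hξ.2.1 hξ.2.2) (lt_irrefl α)
  · -- Case B : α is not a limit point of C β
    set η₀ := sSup (C β ∩ Set.Iio α) with hη₀def
    have hη₀α : η₀ < α := lt_of_le_of_ne (csSup_le' fun x hx => hx.2.le) hsup
    have hbelow : ∀ x ∈ C β, x < α → x ≤ η₀ := fun x hx hxα =>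
      le_csSup ⟨α, fun y hy => hy.2.le⟩ ⟨hx, hxα⟩
    -- key set equalities for ξ ∈ (η₀, α)
    have k1 : ∀ ξ, η₀ < ξ → ξ < α → C β ∩ Set.Iio ξ = C β ∩ Set.Iio α := by
      intro ξ hξ1 hξ2
      ext x
      simp only [mem_inter_iff, mem_Iio]
      constructor
      · exact fun h => ⟨h.1, h.2.trans hξ2⟩
      · exact fun h => ⟨h.1, lt_of_le_of_lt (hbelow x h.1 h.2) hξ1⟩
    have k2 : ∀ ξ, η₀ < ξ → ξ < α → C β ∩ Set.Ici ξ = C β ∩ Set.Ici α := by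
      intro ξ hξ1 hξ2
      ext x
      simp only [mem_inter_iff, mem_Ici]
      constructor
      · rintro ⟨h1, h2⟩
        refine ⟨h1, ?_⟩
        by_contra hxα
        push_neg at hxα
        exact absurd (lt_of_le_of_lt (h2.trans (hbelow x h1 hxα)) hξ1) (lt_irrefl ξ)
      · exact fun h => ⟨h.1, le_trans hξ2.le h.2⟩
    have k3 : ∀ ξ, η₀ < ξ → ξ < α → Lam C ξ β = Lam C α β := by
      intro ξ hξ1 hξ2
      have hsetseq : {δ | IsLimPt (C β ∩ Set.Iic ξ) δ} = {δ | IsLimPt (C β ∩ Set.Iic α) δ} := by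
        ext d
        simp only [mem_setOf_eq]
        constructor
        · exact fun h => limpt_mono
            (inter_subset_inter (subset_refl _) (Iic_subset_Iic.2 hξ2.le)) h
        · intro h
          have hdα : d ≤ α := limpt_le h inter_subset_right
          have hdξ : d ≤ ξ := by
            by_contra hdgt
            push_neg at hdgt
            obtain ⟨x, hx, hξx, hxd⟩ := exists_mem_limpt h hdgt
            have hxα : x < α := lt_of_lt_of_le hxd hdα
            exact absurd (lt_of_lt_of_le hξx ((hbelow x hx.1 hxα).trans hξ1.le))
              (lt_irrefl ξ)
          refine (limpt_congr ?_).1 h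
          ext x
          simp only [mem_inter_iff, mem_Iic, mem_Iio]
          constructor
          · rintro ⟨⟨h1, _⟩, h3⟩
            exact ⟨⟨h1, (le_of_lt (lt_of_lt_of_le h3 hdξ))⟩, h3⟩
          · rintro ⟨⟨h1, h2⟩, h3⟩
            exact ⟨⟨h1, h2.trans hξ2.le⟩, h3⟩
      rw [Lam, Lam, hsetseq]
    have k4 : ∀ ξ, η₀ < ξ → ξ < α →
        C β ∩ Set.Ico (Lam C α β) ξ = C β ∩ Set.Ico (Lam C α β) α := by
      intro ξ hξ1 hξ2
      ext x
      simp only [mem_inter_iff, mem_Ico]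
      constructor
      · exact fun h => ⟨h.1, h.2.1, h.2.2.trans hξ2⟩
      · exact fun h => ⟨h.1, h.2.1, lt_of_le_of_lt (hbelow x h.1 h.2.2) hξ1⟩
    -- components of rho ξ β for good ξ
    have hcomp : ∀ ξ, η₀ < ξ → ξ < α → rho ξ β ≤ ν →
        (rho ξ (sInf (C β ∩ Set.Ici α)) ≤ ν ∧
         ∀ ζ ∈ C β ∩ Set.Ico (Lam C α β) ξ, rho ζ ξ ≤ ν) := by
      intro ξ hξ1 hξ2 hξν
      have hξβ : ξ < β := hξ2.trans hαβ
      constructor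
      · have h := rho_nxt_le_rho hC hrho hξβ hβ
        rw [k2 ξ hξ1 hξ2] at h
        exact h.trans hξν
      · intro ζ hζ
        have h := rho_im_le_rho hC hrho hξβ hβ (ξ := ζ)
          (by rw [k3 ξ hξ1 hξ2]; exact hζ)
        exact h.trans hξν
    -- the next point β₁ of the walk
    have hβ₁mem := nxt_mem hC hαβ hβ
    set β₁ := sInf (C β ∩ Set.Ici α) with hβ₁def
    have hβ₁β : β₁ < β := nxt_lt hC hαβ hβ
    have hβ₁ω : β₁ < omega2.{u} := hβ₁β.trans hβ
    have hαβ₁ : α ≤ β₁ := hβ₁mem.2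
    -- pick good ξ above any threshold
    have hpick : ∀ η < α, ∃ ξ, η ≤ ξ ∧ η₀ < ξ ∧ ξ < α ∧ rho ξ β ≤ ν := by
      intro η hη
      obtain ⟨ξ, hηξ, hξα, hξν⟩ := hcof (max η (Order.succ η₀))
        (max_lt hη (hα.succ_lt hη₀α))
      exact ⟨ξ, le_trans (le_max_left _ _) hηξ,
        Order.succ_le_iff.1 (le_trans (le_max_right _ _) hηξ), hξα, hξν⟩
    -- second component
    have hrhoβ₁ : rho α β₁ ≤ ν := by
      rcases eq_or_lt_of_le hαβ₁ with heq | hαβ₁lt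
      · rw [← heq, hrho.refl]; exact zero_le
      · refine IH β₁ hβ₁β hβ₁ω α ν hαβ₁lt hα hν fun η hη => ?_
        obtain ⟨ξ, hηξ, hξ1, hξ2, hξν⟩ := hpick η hη
        exact ⟨ξ, hηξ, hξ2, (hcomp ξ hξ1 hξ2 hξν).1⟩
    refine rho_le_of_comps hrho hαβ hβ hotp hrhoβ₁ ?_
    -- third components
    intro ζ hζ
    have hζα : ζ < α := hζ.2.2
    obtain ⟨ξ, hηξ, hξ1, hξ2, hξν⟩ := hpick (Order.succ ζ) (hα.succ_lt hζα)
    have hζξ : ζ < ξ := Order.succ_le_iff.1 hηξ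
    have hcomps := hcomp ξ hξ1 hξ2 hξν
    have hζξν : rho ζ ξ ≤ ν := hcomps.2 ζ ⟨hζ.1, hζ.2.1, hζξ⟩
    have hξβ₁ν : rho ξ β₁ ≤ ν := hcomps.1
    rcases eq_or_lt_of_le hαβ₁ with heq | hαβ₁lt
    · -- β₁ = α
      have h := (subadd hC hrho β₁ hβ₁ω ζ ξ hζξ.le (hξ2.trans_le hαβ₁).le).1
      rw [heq]
      exact h.trans (max_le hζξν hξβ₁ν)
    · -- α < β₁
      have h1 : rho ζ β₁ ≤ ν := by
        have h := (subadd hC hrho β₁ hβ₁ω ζ ξ hζξ.le (hξ2.trans hαβ₁lt).le).1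
        exact h.trans (max_le hζξν hξβ₁ν)
      have h2 := (subadd hC hrho β₁ hβ₁ω ζ α (hζα.le) hαβ₁lt.le).2
      exact h2.trans (max_le h1 hrhoβ₁)

end TodRho
/-- If `α < β < ω₂`, `α` is a limit ordinal, `ν < ω₁`, and the set
`{ξ < α : ρ(ξ,β) ≤ ν}` is cofinal in `α`, then `ρ(α,β) ≤ ν`. -/
theorem rho_le_of_cofinal (C : Ordinal.{u} → Set Ordinal.{u}) (hC : SqSeq C)
    (rho : Ordinal.{u} → Ordinal.{u} → Ordinal.{u}) (hrho : RhoFun C rho)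
    (α β ν : Ordinal.{u}) (hαβ : α < β) (hβ : β < omega2.{u})
    (hα : Order.IsSuccLimit α) (hν : ν < omega1.{u})
    (hcof : ∀ η < α, ∃ ξ, η ≤ ξ ∧ ξ < α ∧ rho ξ β ≤ ν) :
    rho α β ≤ ν :=
  TodRho.main_aux hC hrho β hβ α ν hαβ hα hν hcof
end
end

section
/- For every limit ordinal β < ω₂ and every γ with β < γ < ω₂, there exists β' < β such that for all α with β' < α < β, ρ(α, γ) ≥ ρ(α, β). -/
open Ordinal Set

universe u

noncomputable section

-- auxiliary lemmas

lemma SqSeq.subset_Iio {C : Ordinal.{u} → Set Ordinal.{u}} (hC : SqSeq C)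
    {γ : Ordinal.{u}} (hγ : γ < omega2.{u}) : C γ ⊆ Set.Iio γ := by
  rcases Ordinal.zero_or_succ_or_isSuccLimit γ with h | ⟨δ, h⟩ | h
  · subst h; rw [hC.zero]; exact empty_subset _
  · subst h
    rw [← Ordinal.add_one_eq_succ, hC.succ]
    intro x hx
    rw [mem_singleton_iff] at hx; subst hx
    rw [mem_Iio, Ordinal.add_one_eq_succ]
    exact Order.lt_succ x
  · exact (hC.club γ hγ h).1

lemma SqSeq.nonempty_above {C : Ordinal.{u} → Set Ordinal.{u}} (hC : SqSeq C)
    {β γ : Ordinal.{u}} (hβγ : β < γ) (hγ : γ < omega2.{u}) :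
    (C γ ∩ Set.Ici β).Nonempty := by
  rcases Ordinal.zero_or_succ_or_isSuccLimit γ with h | ⟨δ, h⟩ | h
  · subst h; exact absurd hβγ (not_lt_zero (a := β))
  · subst h
    have hmem : δ ∈ C (Order.succ δ) := by
      rw [← Ordinal.add_one_eq_succ, hC.succ]; exact rfl
    exact ⟨δ, hmem, Order.lt_succ_iff.mp hβγ⟩
  · obtain ⟨η, hη, hβη⟩ := (hC.club γ hγ h).2.1 β hβγ
    exact ⟨η, hη, le_of_lt hβη⟩

lemma rho_min_le {C : Ordinal.{u} → Set Ordinal.{u}}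
    {rho : Ordinal.{u} → Ordinal.{u} → Ordinal.{u}} (hrho : RhoFun C rho)
    {α δ : Ordinal.{u}} (hαδ : α < δ) (hδ : δ < omega2.{u}) :
    rho α (sInf (C δ ∩ Set.Ici α)) ≤ rho α δ := by
  rw [hrho.eq α δ hαδ hδ]
  haveI h1 : Small.{u} ((C δ ∩ Set.Ico (Lam C α δ) α : Set Ordinal.{u})) :=
    small_subset (show (C δ ∩ Set.Ico (Lam C α δ) α : Set Ordinal.{u}) ⊆ Set.Iio α from
      fun x hx => hx.2.2)
  haveI h2 : Small.{u} (((fun ξ => rho ξ α) '' (C δ ∩ Set.Ico (Lam C α δ) α) : Set Ordinal.{u})) :=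
    small_image _ _
  refine le_csSup Ordinal.bddAbove_of_small ?_
  exact Or.inl (mem_insert_iff.mpr (Or.inr rfl))

lemma sInf_shift {C : Ordinal.{u} → Set Ordinal.{u}}
    {α β γ : Ordinal.{u}} (hs : sSup (C γ ∩ Set.Iio β) < α) (hαβ : α < β)
    (hne : (C γ ∩ Set.Ici β).Nonempty) :
    sInf (C γ ∩ Set.Ici α) = sInf (C γ ∩ Set.Ici β) := by
  have hη := csInf_mem hne
  set η := sInf (C γ ∩ Set.Ici β) with hηdef
  apply le_antisymm
  · exact csInf_le' ⟨hη.1, le_of_lt (lt_of_lt_of_le hαβ hη.2)⟩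
  · refine le_csInf ⟨η, hη.1, le_of_lt (lt_of_lt_of_le hαβ hη.2)⟩ ?_
    rintro e ⟨heC, heα⟩
    rcases lt_or_ge e β with h | h
    · exact absurd (le_csSup ⟨β, fun x hx => le_of_lt hx.2⟩ (⟨heC, h⟩ : e ∈ C γ ∩ Set.Iio β)) (not_le.mpr (lt_of_lt_of_le hs heα))
    · exact csInf_le' ⟨heC, h⟩

/-- in the coherent case, the two ρ values are equal for all α < β -/
lemma rho_coh_eq {C : Ordinal.{u} → Set Ordinal.{u}} (hC : SqSeq C)
    {rho : Ordinal.{u} → Ordinal.{u} → Ordinal.{u}} (hrho : RhoFun C rho)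
    {α β γ : Ordinal.{u}} (hβ : Order.IsSuccLimit β) (hαβ : α < β) (hβγ : β < γ)
    (hγ : γ < omega2.{u}) (hcoh : C β = C γ ∩ Set.Iio β) :
    rho α β = rho α γ := by
  have hβ2 : β < omega2.{u} := hβγ.trans hγ
  have h1 : C β ∩ Set.Iio α = C γ ∩ Set.Iio α := by
    rw [hcoh, inter_assoc]
    congr 1
    ext x; simp only [mem_inter_iff, mem_Iio]
    exact ⟨fun h => h.2, fun h => ⟨h.trans hαβ, h⟩⟩
  have h2 : C β ∩ Set.Iic α = C γ ∩ Set.Iic α := by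
    rw [hcoh, inter_assoc]
    congr 1
    ext x; simp only [mem_inter_iff, mem_Iio, mem_Iic]
    exact ⟨fun h => h.2, fun h => ⟨lt_of_le_of_lt h hαβ, h⟩⟩
  have hLam : Lam C α β = Lam C α γ := by unfold Lam; rw [h2]
  have hinf : sInf (C β ∩ Set.Ici α) = sInf (C γ ∩ Set.Ici α) := by
    obtain ⟨e, heC, hαe⟩ := (hC.club β hβ2 hβ).2.1 α hαβ
    have heβ : e < β := (hC.club β hβ2 hβ).1 heC
    have heγ : e ∈ C γ := (hcoh ▸ heC).1
    have hsub : C β ∩ Set.Ici α ⊆ C γ ∩ Set.Ici α := by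
      rintro x ⟨hx, hx2⟩; exact ⟨(hcoh ▸ hx).1, hx2⟩
    set m := sInf (C γ ∩ Set.Ici α) with hmdef
    have hm : m ∈ C γ ∩ Set.Ici α := csInf_mem ⟨e, heγ, le_of_lt hαe⟩
    have hmβ : m < β := lt_of_le_of_lt (csInf_le' ⟨heγ, le_of_lt hαe⟩) heβ
    have hmB : m ∈ C β ∩ Set.Ici α := ⟨hcoh ▸ ⟨hm.1, hmβ⟩, hm.2⟩
    exact le_antisymm (csInf_le' hmB)
      (le_csInf ⟨m, hmB⟩ (fun b hb => csInf_le' (hsub hb)))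
  have hico : C β ∩ Set.Ico (Lam C α β) α = C γ ∩ Set.Ico (Lam C α γ) α := by
    rw [← hLam, hcoh, inter_assoc]
    congr 1
    ext x; simp only [mem_inter_iff, mem_Iio, mem_Ico]
    exact ⟨fun h => h.2, fun h => ⟨h.2.trans hαβ, h⟩⟩
  rw [hrho.eq α β hαβ hβ2, hrho.eq α γ (hαβ.trans hβγ) hγ, h1, hinf, hico]

/-- For every limit ordinal `β < ω₂` and `γ` with `β < γ < ω₂`, there is `β' < β`
such that `ρ(α,γ) ≥ ρ(α,β)` for all `α` with `β' < α < β`. -/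
theorem rho_ge_on_tail (C : Ordinal.{u} → Set Ordinal.{u}) (hC : SqSeq C)
    (rho : Ordinal.{u} → Ordinal.{u} → Ordinal.{u}) (hrho : RhoFun C rho)
    (β γ : Ordinal.{u}) (hβ : Order.IsSuccLimit β) (hβγ : β < γ) (hγ : γ < omega2.{u}) :
    ∃ β' < β, ∀ α : Ordinal.{u}, β' < α → α < β → rho α β ≤ rho α γ := by
  have main : ∀ γ : Ordinal.{u}, β < γ → γ < omega2.{u} →
      ∃ β' < β, ∀ α : Ordinal.{u}, β' < α → α < β → rho α β ≤ rho α γ := by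
    intro γ
    induction γ using Ordinal.induction with
    | h γ IH =>
      intro hβγ hγ
      have hβ2 : β < omega2.{u} := hβγ.trans hγ
      have hne : (C γ ∩ Set.Ici β).Nonempty := hC.nonempty_above hβγ hγ
      by_cases hlp : IsLimPt (C γ) β
      · have hcoh := hC.coh β γ hγ hlp
        exact ⟨0, hβ.pos, fun α hα0 hαβ =>
          le_of_eq (rho_coh_eq hC hrho hβ hαβ hβγ hγ hcoh)⟩
      · have hsup : sSup (C γ ∩ Set.Iio β) < β := by
          rcases lt_or_eq_of_le (csSup_le' (show β ∈ upperBounds (C γ ∩ Set.Iio β) from fun x hx => le_of_lt hx.2)) with h | h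
          · exact h
          · exact absurd ⟨hβ.pos, h⟩ hlp
        have hη := csInf_mem hne
        rcases eq_or_lt_of_le (show β ≤ sInf (C γ ∩ Set.Ici β) from hη.2) with hηβ | hηβ
        · refine ⟨sSup (C γ ∩ Set.Iio β), hsup, fun α hsα hαβ => ?_⟩
          have h1 : sInf (C γ ∩ Set.Ici α) = sInf (C γ ∩ Set.Ici β) :=
            sInf_shift hsα hαβ hne
          have := rho_min_le hrho (hαβ.trans hβγ) hγ
          rwa [h1, ← hηβ] at this
        · have hηγ : sInf (C γ ∩ Set.Ici β) < γ := hC.subset_Iio hγ hη.1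
          obtain ⟨β', hβ'β, hIH⟩ := IH _ hηγ hηβ (hηγ.trans hγ)
          refine ⟨max β' (sSup (C γ ∩ Set.Iio β)), max_lt hβ'β hsup, fun α hα hαβ => ?_⟩
          have h1 : sInf (C γ ∩ Set.Ici α) = sInf (C γ ∩ Set.Ici β) :=
            sInf_shift (lt_of_le_of_lt (le_max_right _ _) hα) hαβ hne
          calc rho α β ≤ rho α (sInf (C γ ∩ Set.Ici β)) :=
                hIH α (lt_of_le_of_lt (le_max_left _ _) hα) hαβ
            _ = rho α (sInf (C γ ∩ Set.Ici α)) := by rw [h1]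
            _ ≤ rho α γ := rho_min_le hrho (hαβ.trans hβγ) hγ
  exact main γ hβγ hγ
end
end
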